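/- arXiv:1207.0208 — 3 statements merged into one kernel-verified Lean document; each statement's English description precedes it below -/
import Mathlib

section
/- Let A₀ be a Dedekind domain with fraction field K₀, Y = Spec A₀, and let D₁,…,D_r be ℚ-divisors on Y. Then the ℕ^r-graded A₀-algebra B = ⊕_{(n₁,…,n_r)∈ℕ^r} H⁰(Y, O_Y(⌊ Σ_{i=1}^r n_i D_i ⌋)), regarded as a subalgebra of the monoid algebra ⊕_{(n₁,…,n_r)∈ℕ^r} K₀·t₁^{n₁}⋯t_r^{n_r} = K₀[t₁,…,t_r], is a finitely generated A₀-algebra. -/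
noncomputable section

/-- `H⁰(Y, O_Y(⌊D⌋))` of a `ℚ`-divisor `D` on a "curve" with points `C` and
normalized valuations `ord`. -/
def H0Set {C K₀ : Type*} [Field K₀] (ord : C → K₀ → ℤ) (D : C → ℚ) : Set K₀ :=
  {f | f = 0 ∨ ∀ z : C, 0 ≤ ord z f + ⌊D z⌋}

end
noncomputable section

open IsDedekindDomain

/- the normalized discrete valuation `ord_z` on `K₀` attached to a maximal ideal
(= height-one prime) `z` of the Dedekind domain `A₀` (junk value `0` at `f = 0`). -/
open Classical in
noncomputable def ordAt {A₀ : Type*} [CommRing A₀] [IsDedekindDomain A₀]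
    {K₀ : Type*} [Field K₀] [Algebra A₀ K₀] [IsFractionRing A₀ K₀]
    (z : HeightOneSpectrum A₀) (f : K₀) : ℤ :=
  if h : z.valuation K₀ f = 0 then 0 else -Multiplicative.toAdd (WithZero.unzero h)

end

open IsDedekindDomain

set_option linter.unusedSectionVars false
noncomputable section AuxSection

open IsDedekindDomain.HeightOneSpectrum FractionalIdeal
open scoped nonZeroDivisors Classical Multiplicative

variable {A₀ : Type*} [CommRing A₀] [IsDedekindDomain A₀]
    {K₀ : Type*} [Field K₀] [Algebra A₀ K₀] [IsFractionRing A₀ K₀]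

/-- The fractional ideal attached to an integral divisor. -/
def Phi (K₀ : Type*) [Field K₀] [Algebra A₀ K₀] [IsFractionRing A₀ K₀]
    (e : HeightOneSpectrum A₀ →₀ ℤ) : FractionalIdeal A₀⁰ K₀ :=
  e.prod (HeightOneSpectrum.asIdeal · ^ ·)

lemma phi_ne_zero (e : HeightOneSpectrum A₀ →₀ ℤ) : Phi K₀ e ≠ 0 := by
  refine Finset.prod_ne_zero_iff.mpr fun v _ => ?_
  exact zpow_ne_zero _ (coeIdeal_ne_zero.mpr v.ne_bot)

lemma count_phi (v : HeightOneSpectrum A₀) (e : HeightOneSpectrum A₀ →₀ ℤ) :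
    FractionalIdeal.count K₀ v (Phi K₀ e) = e v :=
  count_finsuppProd K₀ v e

lemma eq_of_count {I J : FractionalIdeal A₀⁰ K₀} (hI : I ≠ 0) (hJ : J ≠ 0)
    (h : ∀ v, FractionalIdeal.count K₀ v I = FractionalIdeal.count K₀ v J) : I = J := by
  rw [← finprod_heightOneSpectrum_factorization' (K := K₀) hI,
    ← finprod_heightOneSpectrum_factorization' (K := K₀) hJ]
  exact finprod_congr fun v => by rw [h v]

lemma phi_add (e e' : HeightOneSpectrum A₀ →₀ ℤ) :
    Phi K₀ (e + e') = Phi K₀ e * Phi K₀ e' := by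
  refine eq_of_count (phi_ne_zero _) (mul_ne_zero (phi_ne_zero _) (phi_ne_zero _)) fun v => ?_
  rw [count_phi, count_mul K₀ v (phi_ne_zero _) (phi_ne_zero _), count_phi, count_phi,
    Finsupp.add_apply]

lemma phi_le_one {e : HeightOneSpectrum A₀ →₀ ℤ} (he : ∀ v, 0 ≤ e v) : Phi K₀ e ≤ 1 := by
  refine Finset.prod_induction _ (· ≤ (1 : FractionalIdeal A₀⁰ K₀))
    (fun a b ha hb => le_trans (mul_le_mul_right hb a) (by rwa [mul_one])) le_rfl fun v _ => ?_
  show (↑v.asIdeal : FractionalIdeal A₀⁰ K₀) ^ (e v) ≤ 1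
  have h0 : e v = ((e v).toNat : ℤ) := (Int.toNat_of_nonneg (he v)).symm
  rw [h0, zpow_natCast, ← coeIdeal_pow]
  exact coeIdeal_le_one

lemma phi_mono {e e' : HeightOneSpectrum A₀ →₀ ℤ} (h : ∀ v, e v ≤ e' v) :
    Phi K₀ e' ≤ Phi K₀ e := by
  have : Phi K₀ e' = Phi K₀ e * Phi K₀ (e' - e) := by
    rw [← phi_add]; congr 1; abel
  rw [this]
  have h1 : Phi K₀ (e' - e) ≤ 1 := phi_le_one fun v => by
    rw [Finsupp.sub_apply]; have := h v; omega
  calc Phi K₀ e * Phi K₀ (e' - e) ≤ Phi K₀ e * 1 := mul_le_mul_right h1 _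
    _ = Phi K₀ e := mul_one _

lemma count_spanSingleton (z : HeightOneSpectrum A₀) {f : K₀} (hf : f ≠ 0) :
    FractionalIdeal.count K₀ z (spanSingleton A₀⁰ f) = ordAt z f := by
  obtain ⟨n, d, hd, hnd⟩ := IsFractionRing.div_surjective (A := A₀) f
  have hd0 : d ≠ 0 := nonZeroDivisors.ne_zero hd
  have hn0 : n ≠ 0 := by
    rintro rfl
    rw [_root_.map_zero, zero_div] at hnd
    exact hf hnd.symm
  have hsne : spanSingleton A₀⁰ f ≠ 0 := by
    rw [ne_eq, spanSingleton_eq_zero_iff]; exact hf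
  set cn : ℤ := ((Associates.mk z.asIdeal).count (Associates.mk (Ideal.span {n})).factors : ℤ)
    with hcn
  set cd : ℤ := ((Associates.mk z.asIdeal).count (Associates.mk (Ideal.span {d})).factors : ℤ)
    with hcd
  have hspan : spanSingleton A₀⁰ f
      = spanSingleton A₀⁰ ((algebraMap A₀ K₀ d)⁻¹) * ↑(Ideal.span {n} : Ideal A₀) := by
    rw [coeIdeal_span_singleton, spanSingleton_mul_spanSingleton, ← hnd, div_eq_inv_mul]
  have hcount : FractionalIdeal.count K₀ z (spanSingleton A₀⁰ f) = cn - cd :=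
    count_well_defined K₀ z hsne hspan
  have hval : z.valuation K₀ f =
      ((Multiplicative.ofAdd (cd - cn) : Multiplicative ℤ) : WithZero (Multiplicative ℤ)) := by
    rw [← hnd, map_div₀, valuation_of_algebraMap, valuation_of_algebraMap,
      intValuation_apply, intValuation_apply, z.intValuationDef_if_neg hn0,
      z.intValuationDef_if_neg hd0, WithZero.exp, WithZero.exp, ← WithZero.coe_div]
    congr 1
    have h1 : (-cn) - (-cd) = cd - cn := by ring
    rw [← ofAdd_sub, h1]
  have hvne : z.valuation K₀ f ≠ 0 := by rw [hval]; exact WithZero.coe_ne_zero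
  rw [ordAt, dif_neg hvne, hcount]
  have hu : WithZero.unzero hvne = Multiplicative.ofAdd (cd - cn) := by
    rw [← WithZero.coe_inj, WithZero.coe_unzero, hval]
  rw [hu, toAdd_ofAdd]
  ring

lemma mem_phi {f : K₀} (hf : f ≠ 0) (e : HeightOneSpectrum A₀ →₀ ℤ) :
    f ∈ Phi K₀ e ↔ ∀ z, e z ≤ ordAt z f := by
  have hsne : spanSingleton A₀⁰ f ≠ 0 := by
    rwa [ne_eq, spanSingleton_eq_zero_iff]
  constructor
  · intro hmem z
    have hle : spanSingleton A₀⁰ f ≤ Phi K₀ e := spanSingleton_le_iff_mem.mpr hmem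
    have := count_mono K₀ z hsne hle
    rwa [count_phi, count_spanSingleton z hf] at this
  · intro h
    have hfin : {v : HeightOneSpectrum A₀ |
        FractionalIdeal.count K₀ v (spanSingleton A₀⁰ f) ≠ 0}.Finite :=
      Filter.eventually_cofinite.mp (finite_factors (spanSingleton A₀⁰ f))
    set df : HeightOneSpectrum A₀ →₀ ℤ :=
      ⟨hfin.toFinset, fun v => FractionalIdeal.count K₀ v (spanSingleton A₀⁰ f),
        fun v => by simp [Set.Finite.mem_toFinset]⟩ with hdf
    have hspan : spanSingleton A₀⁰ f = Phi K₀ df :=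
      eq_of_count hsne (phi_ne_zero _) fun v => by
        rw [count_phi]; rfl
    have : spanSingleton A₀⁰ f ≤ Phi K₀ e := by
      rw [hspan]
      refine phi_mono fun v => ?_
      have : df v = ordAt v f := count_spanSingleton v hf
      rw [this]; exact h v
    exact this (mem_spanSingleton_self A₀⁰ f)


def negFloor (q : HeightOneSpectrum A₀ →₀ ℚ) : HeightOneSpectrum A₀ →₀ ℤ :=
  q.mapRange (fun x => -⌊x⌋) (by simp)

lemma negFloor_apply (q : HeightOneSpectrum A₀ →₀ ℚ) (z : HeightOneSpectrum A₀) :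
    negFloor q z = -⌊q z⌋ :=
  Finsupp.mapRange_apply

/-- Coercion of an integral divisor into a rational divisor. -/
def iotaZ (k : HeightOneSpectrum A₀ →₀ ℤ) : HeightOneSpectrum A₀ →₀ ℚ :=
  k.mapRange (fun n : ℤ => (n : ℚ)) (by simp)

lemma iotaZ_apply (k : HeightOneSpectrum A₀ →₀ ℤ) (z : HeightOneSpectrum A₀) :
    iotaZ k z = (k z : ℚ) :=
  Finsupp.mapRange_apply

lemma negFloor_add_int (q : HeightOneSpectrum A₀ →₀ ℚ) (k : HeightOneSpectrum A₀ →₀ ℤ) :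
    negFloor (q + iotaZ k) = negFloor q - k := by
  ext z
  rw [negFloor_apply, Finsupp.add_apply, iotaZ_apply, Int.floor_add_intCast, Finsupp.sub_apply,
    negFloor_apply]
  ring

lemma negFloor_int (k : HeightOneSpectrum A₀ →₀ ℤ) :
    negFloor (iotaZ k) = -k := by
  have : iotaZ k = 0 + iotaZ k := by rw [zero_add]
  rw [this, negFloor_add_int]
  ext z
  simp [negFloor_apply]

lemma phi_zero : Phi K₀ (0 : HeightOneSpectrum A₀ →₀ ℤ) = 1 := by
  simp [Phi]

lemma phi_nsmul (n : ℕ) (e : HeightOneSpectrum A₀ →₀ ℤ) :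
    Phi K₀ (n • e) = Phi K₀ e ^ n := by
  induction n with
  | zero => simp [phi_zero]
  | succ n ih => rw [succ_nsmul, phi_add, ih, pow_succ]

lemma phi_sum {ι : Type*} (s : Finset ι) (a : ι → (HeightOneSpectrum A₀ →₀ ℤ)) :
    Phi K₀ (∑ i ∈ s, a i) = ∏ i ∈ s, Phi K₀ (a i) := by
  classical
  induction s using Finset.induction with
  | empty => simp [phi_zero]
  | insert _ _ hx ih =>
      rw [Finset.sum_insert hx, Finset.prod_insert hx, phi_add, ih]

lemma mem_H0Set_iff (q : HeightOneSpectrum A₀ →₀ ℚ) (f : K₀) :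
    f ∈ H0Set (ordAt (K₀ := K₀)) ⇑q ↔ f ∈ Phi K₀ (negFloor q) := by
  constructor
  · rintro (rfl | h)
    · exact zero_mem (Phi K₀ (negFloor q)).coeToSubmodule
    · by_cases hf : f = 0
      · exact hf ▸ zero_mem (Phi K₀ (negFloor q)).coeToSubmodule
      · refine (mem_phi hf _).mpr fun z => ?_
        rw [negFloor_apply]
        have := h z
        omega
  · intro hmem
    by_cases hf : f = 0
    · exact Or.inl hf
    · refine Or.inr fun z => ?_
      have := (mem_phi hf _).mp hmem z
      rw [negFloor_apply] at this
      omega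

end AuxSection

open FractionalIdeal
open scoped nonZeroDivisors Classical Multiplicative
set_option maxHeartbeats 1000000 in
/-- For `ℚ`-divisors `D₁, …, D_r` on `Y = Spec A₀`, `A₀` a Dedekind
domain with fraction field `K₀`, the `ℕ^r`-graded algebra
`B = ⊕_{(n₁,…,n_r)} H⁰(Y, O_Y(⌊Σ nᵢ Dᵢ⌋))`, viewed inside `K₀[t₁,…,t_r]`, is a
finitely generated `A₀`-algebra. -/
theorem multigraded_sections_algebra_finitely_generated
    (A₀ : Type*) [CommRing A₀] [IsDedekindDomain A₀]
    (K₀ : Type*) [Field K₀] [Algebra A₀ K₀] [IsFractionRing A₀ K₀]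
    (r : ℕ) (D : Fin r → (HeightOneSpectrum A₀ →₀ ℚ))
    (B : Subalgebra A₀ (MvPolynomial (Fin r) K₀))
    (hB : (B : Set (MvPolynomial (Fin r) K₀)) =
      {p | ∀ d : Fin r →₀ ℕ,
        MvPolynomial.coeff d p ∈
          H0Set (ordAt (K₀ := K₀)) (fun z => ∑ i, (d i : ℚ) * D i z)}) :
    B.FG := by
  classical
  -- common denominator
  set N : ℕ := ∏ i : Fin r, ∏ z ∈ (D i).support, (D i z).den with hNdef
  have hNpos : 0 < N :=
    Finset.prod_pos fun i _ => Finset.prod_pos fun z _ => (D i z).pos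
  have hdvd : ∀ (i : Fin r) (z : HeightOneSpectrum A₀), (D i z).den ∣ N := by
    intro i z
    rw [hNdef]
    by_cases hz : z ∈ (D i).support
    · exact dvd_trans (Finset.dvd_prod_of_mem (fun z => (D i z).den) hz)
        (Finset.dvd_prod_of_mem (fun i => ∏ z ∈ (D i).support, (D i z).den) (Finset.mem_univ i))
    · rw [Finsupp.notMem_support_iff] at hz
      rw [hz]
      simp
  -- the integral divisors `G i` with `iotaZ (G i) = N • D i`
  set G : Fin r → (HeightOneSpectrum A₀ →₀ ℤ) :=
    fun i => (D i).mapRange (fun x => ⌊(N : ℚ) * x⌋) (by simp) with hGdef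
  have hG : ∀ (i : Fin r) (z : HeightOneSpectrum A₀), ((G i z : ℤ) : ℚ) = (N : ℚ) * D i z := by
    intro i z
    obtain ⟨t, ht⟩ := hdvd i z
    set q : ℚ := D i z with hq
    have hden0 : ((q.den : ℚ)) ≠ 0 := Nat.cast_ne_zero.mpr q.den_nz
    have hint : ((q.num * t : ℤ) : ℚ) = (N : ℚ) * q := by
      have hqq : (q.num : ℚ) = q * q.den := (div_eq_iff hden0).mp (Rat.num_div_den q)
      push_cast
      rw [hqq, ht]
      push_cast
      ring
    have : G i z = ⌊(N : ℚ) * q⌋ := Finsupp.mapRange_apply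
    rw [this, ← hint, Int.floor_intCast, hint]
  -- the rational divisor attached to a multidegree
  set δ : (Fin r →₀ ℕ) → (HeightOneSpectrum A₀ →₀ ℚ) :=
    fun d => ∑ i : Fin r, ((d i : ℕ) : ℚ) • D i with hδdef
  have hδ : ∀ (d : Fin r →₀ ℕ) z, δ d z = ∑ i, (d i : ℚ) * D i z := by
    intro d z
    rw [hδdef, Finsupp.finset_sum_apply]
    simp
  have hfun : ∀ d : Fin r →₀ ℕ,
      (fun z => ∑ i, (d i : ℚ) * D i z) = ⇑(δ d) :=
    fun d => funext fun z => (hδ d z).symm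
  -- splitting of the divisor of a multidegree
  have hsplit : ∀ c m : Fin r →₀ ℕ,
      δ (c + N • m) = δ c + iotaZ (∑ i : Fin r, (m i) • G i) := by
    intro c m
    ext z
    rw [Finsupp.add_apply, hδ, hδ, iotaZ_apply, Finsupp.finset_sum_apply, Int.cast_sum,
      ← Finset.sum_add_distrib]
    refine Finset.sum_congr rfl fun i _ => ?_
    rw [show (c + N • m) i = c i + N * m i from by
        rw [Finsupp.add_apply, Finsupp.smul_apply, smul_eq_mul],
      Finsupp.smul_apply]
    simp only [nsmul_eq_mul]
    push_cast
    rw [hG i z]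
    ring
  have hPhiSplit : ∀ c m : Fin r →₀ ℕ,
      Phi K₀ (negFloor (δ (c + N • m)))
        = Phi K₀ (negFloor (δ c)) * ∏ i : Fin r, (Phi K₀ (-(G i))) ^ (m i) := by
    intro c m
    rw [hsplit c m, negFloor_add_int, sub_eq_add_neg]
    have hneg : -(∑ i : Fin r, (m i) • G i) = ∑ i : Fin r, (m i) • (-(G i)) := by
      rw [← Finset.sum_neg_distrib]
      refine Finset.sum_congr rfl fun i _ => ?_
      rw [smul_neg]
    rw [hneg, phi_add, phi_sum]
    congr 1
    exact Finset.prod_congr rfl fun i _ => phi_nsmul _ _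
  -- membership in `B` in terms of the fractional ideals
  have hBmem : ∀ p : MvPolynomial (Fin r) K₀,
      p ∈ B ↔ ∀ d : Fin r →₀ ℕ, MvPolynomial.coeff d p ∈ Phi K₀ (negFloor (δ d)) := by
    intro p
    rw [← SetLike.mem_coe, hB, Set.mem_setOf_eq]
    refine forall_congr' fun d => ?_
    rw [hfun d, mem_H0Set_iff]
  -- choose generators of each fractional ideal
  have hFG : ∀ d : Fin r →₀ ℕ, ∃ T : Finset K₀,
      Submodule.span A₀ (↑T : Set K₀) = (Phi K₀ (negFloor (δ d))).coeToSubmodule :=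
    fun d => fg_of_isNoetherianRing le_rfl _
  choose T hT using hFG
  -- the finite generating set
  set toF : (Fin r → Fin N) → (Fin r →₀ ℕ) :=
    fun c => Finsupp.equivFunOnFinite.symm (fun i => (c i : ℕ)) with htoF
  set S : Finset (MvPolynomial (Fin r) K₀) :=
    ((Finset.univ : Finset (Fin r → Fin N)).biUnion fun c =>
        (T (toF c)).image fun a => MvPolynomial.monomial (toF c) a) ∪
      ((Finset.univ : Finset (Fin r)).biUnion fun i =>
        (T (Finsupp.single i N)).image fun a =>
          MvPolynomial.monomial (Finsupp.single i N) a) with hSdef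
  -- monomials with the right coefficients lie in `B`
  have hmonoB : ∀ (d : Fin r →₀ ℕ) (a : K₀), a ∈ Phi K₀ (negFloor (δ d)) →
      (MvPolynomial.monomial d a : MvPolynomial (Fin r) K₀) ∈ B := by
    intro d a ha
    rw [hBmem]
    intro d'
    rw [MvPolynomial.coeff_monomial]
    split
    · next h => exact h ▸ ha
    · exact zero_mem _
  -- spans to adjoins
  have hspanAdj : ∀ d : Fin r →₀ ℕ,
      (∀ x ∈ T d, (MvPolynomial.monomial d x : MvPolynomial (Fin r) K₀) ∈
        Algebra.adjoin A₀ (↑S : Set (MvPolynomial (Fin r) K₀))) →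
      ∀ a ∈ Phi K₀ (negFloor (δ d)),
        (MvPolynomial.monomial d a : MvPolynomial (Fin r) K₀) ∈
          Algebra.adjoin A₀ (↑S : Set (MvPolynomial (Fin r) K₀)) := by
    intro d hgen a ha
    have ha' : a ∈ Submodule.span A₀ (↑(T d) : Set K₀) := by
      rw [hT d]; exact mem_coe.mpr ha
    clear ha
    induction ha' using Submodule.span_induction with
    | mem x hx => exact hgen x hx
    | zero =>
        rw [_root_.map_zero]
        exact zero_mem _
    | add x y _ _ hx hy =>
        rw [_root_.map_add]
        exact add_mem hx hy
    | smul rc x _ hx =>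
        rw [← MvPolynomial.smul_monomial]
        exact Subalgebra.smul_mem _ hx rc
  -- generators of the box divisors are in `S`
  have hboxS : ∀ (c : Fin r →₀ ℕ), (∀ i, c i < N) →
      ∀ x ∈ T c, (MvPolynomial.monomial c x : MvPolynomial (Fin r) K₀) ∈
        Algebra.adjoin A₀ (↑S : Set (MvPolynomial (Fin r) K₀)) := by
    intro c hc x hx
    refine Algebra.subset_adjoin ?_
    have hcF : toF (fun i => (⟨c i, hc i⟩ : Fin N)) = c := by
      ext i
      simp [htoF]
    rw [Finset.coe_union]
    refine Set.mem_union_left _ ?_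
    simp only [Finset.coe_biUnion, Finset.coe_univ, Set.mem_iUnion]
    exact ⟨fun i => (⟨c i, hc i⟩ : Fin N), trivial, by
      rw [Finset.coe_image]
      exact ⟨x, by rw [hcF]; exact hx, by rw [hcF]⟩⟩
  have hsingS : ∀ (j : Fin r), ∀ x ∈ T (Finsupp.single j N),
      (MvPolynomial.monomial (Finsupp.single j N) x : MvPolynomial (Fin r) K₀) ∈
        Algebra.adjoin A₀ (↑S : Set (MvPolynomial (Fin r) K₀)) := by
    intro j x hx
    refine Algebra.subset_adjoin ?_
    rw [Finset.coe_union]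
    refine Set.mem_union_right _ ?_
    simp only [Finset.coe_biUnion, Finset.coe_univ, Set.mem_iUnion]
    exact ⟨j, trivial, by
      rw [Finset.coe_image]
      exact ⟨x, hx, rfl⟩⟩
  -- the divisor of `single j N`
  have hsingleδ : ∀ j : Fin r, Phi K₀ (negFloor (δ (Finsupp.single j N))) = Phi K₀ (-(G j)) := by
    intro j
    have h1 : δ (Finsupp.single j N) = iotaZ (G j) := by
      ext z
      rw [hδ, iotaZ_apply, hG]
      rw [Finset.sum_eq_single j]
      · rw [Finsupp.single_eq_same]
      · intro b _ hb
        rw [Finsupp.single_eq_of_ne' (Ne.symm hb)]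
        simp
      · intro h
        exact absurd (Finset.mem_univ j) h
    rw [h1, negFloor_int]
  -- THE KEY INDUCTION
  have KEY : ∀ (n : ℕ) (m c : Fin r →₀ ℕ), (m.sum fun _ k => k) ≤ n → (∀ i, c i < N) →
      ∀ a : K₀, a ∈ Phi K₀ (negFloor (δ c)) * ∏ i : Fin r, (Phi K₀ (-(G i))) ^ (m i) →
      (MvPolynomial.monomial (c + N • m) a : MvPolynomial (Fin r) K₀) ∈
        Algebra.adjoin A₀ (↑S : Set (MvPolynomial (Fin r) K₀)) := by
    intro n
    induction n with
    | zero =>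
        intro m c hm hc a ha
        have hm0 : m = 0 := by
          by_contra h
          obtain ⟨i, hi⟩ : ∃ i, m i ≠ 0 := by
            by_contra h2
            push_neg at h2
            exact h (Finsupp.ext fun i => h2 i)
          have h1 : m i ≤ m.sum fun _ k => k := by
            rw [Finsupp.sum]
            exact Finset.single_le_sum (fun _ _ => Nat.zero_le _)
              (Finsupp.mem_support_iff.mpr hi)
          omega
        subst hm0
        rw [smul_zero, add_zero]
        have ha' : a ∈ Phi K₀ (negFloor (δ c)) := by
          have : ∏ i : Fin r, (Phi K₀ (-(G i))) ^ ((0 : Fin r →₀ ℕ) i) = 1 := by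
            simp
          rwa [this, mul_one] at ha
        exact hspanAdj c (hboxS c hc) a ha'
    | succ n IH =>
        intro m c hm hc a ha
        by_cases hm0 : m = 0
        · subst hm0
          rw [smul_zero, add_zero]
          have ha' : a ∈ Phi K₀ (negFloor (δ c)) := by
            have : ∏ i : Fin r, (Phi K₀ (-(G i))) ^ ((0 : Fin r →₀ ℕ) i) = 1 := by
              simp
            rwa [this, mul_one] at ha
          exact hspanAdj c (hboxS c hc) a ha'
        · obtain ⟨j, hj⟩ : ∃ j, m j ≠ 0 := by
            by_contra h
            push_neg at h
            exact hm0 (Finsupp.ext fun i => h i)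
          set m' : Fin r →₀ ℕ := m - Finsupp.single j 1 with hm'def
          have hle : Finsupp.single j 1 ≤ m := by
            rw [Finsupp.single_le_iff]
            omega
          have hm'add : m' + Finsupp.single j 1 = m := tsub_add_cancel_of_le hle
          have hm'sum : (m'.sum fun _ k => k) ≤ n := by
            have : (m.sum fun _ k => k) = (m'.sum fun _ k => k) + 1 := by
              rw [← hm'add, Finsupp.sum_add_index' (fun _ => rfl) (fun _ _ _ => rfl),
                Finsupp.sum_single_index rfl]
            omega
          -- split the product of fractional ideals
          have hprod : ∏ i : Fin r, (Phi K₀ (-(G i))) ^ (m i)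
              = (∏ i : Fin r, (Phi K₀ (-(G i))) ^ (m' i)) * Phi K₀ (-(G j)) := by
            conv_lhs => rw [← hm'add]
            have : ∀ i : Fin r, (Phi K₀ (-(G i))) ^ (((m' + Finsupp.single j 1) : Fin r →₀ ℕ) i)
                = (Phi K₀ (-(G i))) ^ (m' i)
                  * (Phi K₀ (-(G i))) ^ (((Finsupp.single j 1) : Fin r →₀ ℕ) i) := by
              intro i
              rw [Finsupp.add_apply, pow_add]
            rw [Finset.prod_congr rfl fun i _ => this i, Finset.prod_mul_distrib]
            congr 1
            rw [Finset.prod_eq_single j]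
            · rw [Finsupp.single_eq_same, pow_one]
            · intro b _ hb
              rw [Finsupp.single_eq_of_ne' (Ne.symm hb), pow_zero]
            · intro h
              exact absurd (Finset.mem_univ j) h
          have hdeg : c + N • m = (c + N • m') + Finsupp.single j N := by
            rw [← hm'add, smul_add, Finsupp.smul_single, smul_eq_mul, mul_one, add_assoc]
          rw [hprod, ← mul_assoc] at ha
          have ha' : a ∈ ((Phi K₀ (negFloor (δ c)) * ∏ i : Fin r, (Phi K₀ (-(G i))) ^ (m' i) :
              FractionalIdeal A₀⁰ K₀) : Submodule A₀ K₀) *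
              ((Phi K₀ (-(G j)) : FractionalIdeal A₀⁰ K₀) : Submodule A₀ K₀) := by
            rw [← coe_mul]
            exact ha
          rw [hdeg]
          refine Submodule.mul_induction_on ha' (fun x hx y hy => ?_) (fun x y hx hy => ?_)
          · rw [← MvPolynomial.monomial_mul]
            refine mul_mem ?_ ?_
            · exact IH m' c hm'sum hc x (mem_coe.mp hx)
            · have hy' : y ∈ Phi K₀ (negFloor (δ (Finsupp.single j N))) := by
                rw [hsingleδ j]
                exact mem_coe.mp hy
              exact hspanAdj (Finsupp.single j N) (hsingS j) y hy'
          · rw [_root_.map_add]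
            exact add_mem hx hy
  -- conclusion
  refine ⟨S, le_antisymm ?_ ?_⟩
  · rw [Algebra.adjoin_le_iff]
    intro p hp
    rw [hSdef] at hp
    simp only [Finset.coe_union, Finset.coe_biUnion, Finset.coe_univ, Set.mem_union,
      Set.mem_iUnion, Finset.coe_image, Set.mem_image] at hp
    rcases hp with ⟨c, -, x, hx, rfl⟩ | ⟨j, -, x, hx, rfl⟩
    · refine hmonoB _ x ?_
      have hx' : x ∈ Submodule.span A₀ (↑(T (toF c)) : Set K₀) := Submodule.subset_span hx
      rw [hT (toF c)] at hx'
      exact mem_coe.mp hx'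
    · refine hmonoB _ x ?_
      have hx' : x ∈ Submodule.span A₀ (↑(T (Finsupp.single j N)) : Set K₀) :=
        Submodule.subset_span hx
      rw [hT (Finsupp.single j N)] at hx'
      exact mem_coe.mp hx'
  · intro p hp
    rw [hBmem] at hp
    rw [MvPolynomial.as_sum p]
    refine Subalgebra.sum_mem _ fun d _ => ?_
    set m : Fin r →₀ ℕ := d.mapRange (· / N) (Nat.zero_div N) with hmdef
    set c : Fin r →₀ ℕ := d.mapRange (· % N) (Nat.zero_mod N) with hcdef
    have hd : d = c + N • m := by
      ext i
      rw [Finsupp.add_apply, Finsupp.smul_apply, hmdef, hcdef, Finsupp.mapRange_apply,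
        Finsupp.mapRange_apply, smul_eq_mul]
      exact (Nat.mod_add_div (d i) N).symm
    have hc : ∀ i, c i < N := by
      intro i
      rw [hcdef, Finsupp.mapRange_apply]
      exact Nat.mod_lt _ hNpos
    have ha : MvPolynomial.coeff d p ∈
        Phi K₀ (negFloor (δ c)) * ∏ i : Fin r, (Phi K₀ (-(G i))) ^ (m i) := by
      have h2 := hp d
      rwa [show Phi K₀ (negFloor (δ d))
          = Phi K₀ (negFloor (δ c)) * ∏ i : Fin r, (Phi K₀ (-(G i))) ^ (m i) from by
        rw [hd, hPhiSplit c m]] at h2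
    have := KEY (m.sum fun _ k => k) m c le_rfl hc _ ha
    rwa [← hd] at this
end

section
/- Let (m₁,e₁),…,(m_r,e_r) ∈ M × ℤ with the m_i nonzero and generating the lattice M, and let ω = Cone(m₁,…,m_r) ⊂ M_ℚ. Let Δ = {v ∈ N_ℚ : ⟨m_i, v⟩ ≥ −e_i for i = 1,…,r} and assume Δ is nonempty. Let L = ℚ_{≥0}·m be a half-line contained in ω, where m is the primitive generator of L ∩ M (so m generates the semigroup L ∩ M). Let p : ℚ^r → M_ℚ be the linear map sending the i-th standard basis vector to m_i, let ℋ_L be the Hilbert basis of the cone p^{-1}(L) ∩ (ℚ_{≥0})^r in the lattice ℤ^r, let ℋ_L^* = {(s₁,…,s_r) ∈ ℋ_L : Σ_i s_i m_i ≠ 0}, and for s ∈ ℋ_L^* let λ(s) be the unique positive integer with Σ_i s_i m_i = λ(s)·m. Then the set ℋ_L^* is finite and nonempty, the minimum min_{v∈Δ}⟨m, v⟩ exists, and min_{v∈Δ}⟨m, v⟩ = −min_{s∈ℋ_L^*} (Σ_{i=1}^r s_i e_i)/λ(s). -/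
noncomputable section

open scoped BigOperators

/-- coordinatewise embedding of the lattice `ℤⁿ` into `ℚⁿ`. -/
def ιQ {n : ℕ} (m : Fin n → ℤ) : Fin n → ℚ := fun i => (m i : ℚ)

/-- the duality pairing on `ℚⁿ`. -/
def pairQ {n : ℕ} (m v : Fin n → ℚ) : ℚ := ∑ i, m i * v i

/-- the convex cone generated by a set. -/
def coneHull {n : ℕ} (S : Set (Fin n → ℚ)) : Set (Fin n → ℚ) :=
  {v | ∃ (T : Finset (Fin n → ℚ)) (c : (Fin n → ℚ) → ℚ),
    ↑T ⊆ S ∧ (∀ x, 0 ≤ c x) ∧ v = ∑ x ∈ T, c x • x}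

/-- a polyhedral cone: a cone generated by finitely many vectors. -/
def IsPolyhedralCone {n : ℕ} (σ : Set (Fin n → ℚ)) : Prop :=
  ∃ T : Finset (Fin n → ℚ), σ = coneHull ↑T

/-- a strongly convex cone contains no line. -/
def StronglyConvex {n : ℕ} (σ : Set (Fin n → ℚ)) : Prop :=
  ∀ v ∈ σ, -v ∈ σ → v = 0

/-- the dual cone. -/
def dualCone {n : ℕ} (σ : Set (Fin n → ℚ)) : Set (Fin n → ℚ) :=
  {m | ∀ v ∈ σ, 0 ≤ pairQ m v}

/-- `P ∈ Pol_σ(N_ℚ)`: `P` is the Minkowski sum of the convex hull of a nonempty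
finite set with the cone `σ`. -/
def IsSigmaPolyhedron {n : ℕ} (σ P : Set (Fin n → ℚ)) : Prop :=
  ∃ Q : Finset (Fin n → ℚ), Q.Nonempty ∧
    P = {x | ∃ q ∈ convexHull ℚ (↑Q : Set (Fin n → ℚ)), ∃ s ∈ σ, x = q + s}

/- `min_{v ∈ Δ} ⟨m, v⟩` (junk value `0` if the minimum does not exist). -/
open Classical in
noncomputable def polyMin {n : ℕ} (m : Fin n → ℚ) (Δ : Set (Fin n → ℚ)) : ℚ :=
  if h : ∃ r, IsLeast ((fun v => pairQ m v) '' Δ) r then h.choose else 0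

/-- A `σ`-polyhedral divisor on a "curve" with point set `C`. -/
structure PolyDiv (n : ℕ) (σ : Set (Fin n → ℚ)) (C : Type*) where
  Δ : C → Set (Fin n → ℚ)
  isPoly : ∀ z, IsSigmaPolyhedron σ (Δ z)
  finite_ne : {z | Δ z ≠ σ}.Finite

/-- the evaluation `𝔇(m)` of a polyhedral divisor at a lattice point `m`, a `ℚ`-divisor. -/
noncomputable def PolyDiv.eval {n : ℕ} {σ : Set (Fin n → ℚ)} {C : Type*}
    (𝔇 : PolyDiv n σ C) (m : Fin n → ℤ) (z : C) : ℚ :=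
  polyMin (ιQ m) (𝔇.Δ z)

/-- the carrier set of the algebra `A₀[𝔇] = ⊕_{m ∈ σ^∨ ∩ M} H⁰(⌊𝔇(m)⌋)·χ^m`
inside the group algebra `K₀[M]`. -/
def polyDivCarrier {n : ℕ} {σ : Set (Fin n → ℚ)} {C K₀ : Type*} [Field K₀]
    (ord : C → K₀ → ℤ) (𝔇 : PolyDiv n σ C) : Set (AddMonoidAlgebra K₀ (Fin n → ℤ)) :=
  {f | ∀ m : Fin n → ℤ, f.coeff m ≠ 0 → ιQ m ∈ dualCone σ ∧ f.coeff m ∈ H0Set ord (𝔇.eval m)}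

/-- the `m`-th graded piece `A_m ⊆ K₀` of a subalgebra of the group algebra `K₀[M]`. -/
def gradePiece {K₀ : Type*} [Field K₀] {n : ℕ} {R : Type*} [CommRing R]
    [Algebra R (AddMonoidAlgebra K₀ (Fin n → ℤ))]
    (A : Subalgebra R (AddMonoidAlgebra K₀ (Fin n → ℤ))) (m : Fin n → ℤ) : Set K₀ :=
  {c | AddMonoidAlgebra.single m c ∈ A}

/-- a subalgebra of `K₀[M]` is `M`-graded if it contains all homogeneous components
of its elements. -/
def IsGradedSub {K₀ : Type*} [Field K₀] {n : ℕ} {R : Type*} [CommRing R]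
    [Algebra R (AddMonoidAlgebra K₀ (Fin n → ℤ))]
    (A : Subalgebra R (AddMonoidAlgebra K₀ (Fin n → ℤ))) : Prop :=
  ∀ f ∈ A, ∀ m : Fin n → ℤ, AddMonoidAlgebra.single m (f.coeff m) ∈ A

/-- `Frac A = Frac S`: every element of `S` is a ratio of two elements of `A`. -/
def SameFrac {R S : Type*} [CommRing R] [CommRing S] [Algebra R S]
    (A : Subalgebra R S) : Prop :=
  ∀ x : S, ∃ a ∈ A, ∃ b ∈ A, b ≠ 0 ∧ x * b = a

/-- the set of weights of a graded subalgebra of `K₀[M]`. -/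
def weightSet {K₀ : Type*} [Field K₀] {n : ℕ} {R : Type*} [CommRing R]
    [Algebra R (AddMonoidAlgebra K₀ (Fin n → ℤ))]
    (A : Subalgebra R (AddMonoidAlgebra K₀ (Fin n → ℤ))) : Set (Fin n → ℤ) :=
  {m | ∃ c : K₀, c ≠ 0 ∧ AddMonoidAlgebra.single m c ∈ A}

/-- minimum of a finite set of rationals (junk value `0` on the empty set). -/
noncomputable def finMin (s : Finset ℚ) : ℚ := if h : s.Nonempty then s.min' h else 0

end


section Helpers

open Finset

theorem myFarkas (n : ℕ) : ∀ {J : Type} [Fintype J] (a : J → Fin n → ℚ) (b : J → ℚ),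
    (¬ ∃ v : Fin n → ℚ, ∀ j, b j ≤ ∑ i, a j i * v i) →
    ∃ y : J → ℚ, (∀ j, 0 ≤ y j) ∧ (∀ i, ∑ j, y j * a j i = 0) ∧ 0 < ∑ j, y j * b j := by
  induction n with
  | zero =>
    intro J _ a b h
    classical
    have h0 : ∃ j, 0 < b j := by
      by_contra hc
      push_neg at hc
      exact h ⟨fun i => 0, fun j => by simpa using hc j⟩
    obtain ⟨j₀, hj₀⟩ := h0
    refine ⟨fun j => if j = j₀ then 1 else 0, fun j => by positivity, fun i => i.elim0, ?_⟩
    have : ∑ j, (if j = j₀ then (1:ℚ) else 0) * b j = b j₀ := by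
      rw [Finset.sum_eq_single j₀]
      · simp
      · intro j _ hj; simp [hj]
      · simp
    rw [this]; exact hj₀
  | succ n ih =>
    intro J _ a b h
    classical
    set α : J → ℚ := fun j => a j (Fin.last n) with hα
    set a' : J → Fin n → ℚ := fun j i => a j i.castSucc with ha'
    -- the "real rows" of the eliminated system
    set Real : J ⊕ J × J → Prop :=
      Sum.elim (fun j => α j = 0) (fun jk => 0 < α jk.1 ∧ α jk.2 < 0) with hReal
    -- pure combination of a functional
    set comb : (J → ℚ) → (J ⊕ J × J) → ℚ :=
      fun f => Sum.elim f (fun jk => (-α jk.2) * f jk.1 + α jk.1 * f jk.2) with hcomb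
    set A : (J ⊕ J × J) → Fin n → ℚ :=
      fun j' i => if Real j' then comb (fun j => a' j i) j' else 0 with hA
    set B : (J ⊕ J × J) → ℚ := fun j' => if Real j' then comb b j' else 0 with hB
    -- expansion of the original inequality on snoc vectors
    have hsnoc : ∀ (j : J) (w : Fin n → ℚ) (x : ℚ),
        ∑ i, a j i * (Fin.snoc w x : Fin (n+1) → ℚ) i = (∑ i, a' j i * w i) + α j * x := by
      intro j w x
      rw [Fin.sum_univ_castSucc]
      simp [a', α]
    -- the eliminated system is infeasible
    have hinf : ¬ ∃ w : Fin n → ℚ, ∀ j', B j' ≤ ∑ i, A j' i * w i := by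
      rintro ⟨w, hw⟩
      apply h
      set d : J → ℚ := fun j => ∑ i, a' j i * w i with hd
      -- derived inequalities
      have hz : ∀ j, α j = 0 → b j ≤ d j := by
        intro j hj
        have := hw (Sum.inl j)
        simpa [B, A, Real, comb, hj, d] using this
      have hpk : ∀ j k, 0 < α j → α k < 0 →
          (-α k) * b j + α j * b k ≤ (-α k) * d j + α j * d k := by
        intro j k hj hk
        have := hw (Sum.inr (j, k))
        have hr : Real (Sum.inr (j, k)) := ⟨hj, hk⟩
        simp only [B, A, Real, comb, if_pos hr, Sum.elim_inr] at this
        calc (-α k) * b j + α j * b k ≤ ∑ i, ((-α k) * a' j i + α j * a' k i) * w i := this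
          _ = (-α k) * d j + α j * d k := by
              simp only [d, Finset.mul_sum]
              rw [← Finset.sum_add_distrib]
              exact Finset.sum_congr rfl fun x _ => by ring
      -- the interval bounds
      have hlb_le_ub : ∀ j k, 0 < α j → α k < 0 →
          (b j - d j) / α j ≤ (b k - d k) / α k := by
        intro j k hj hk
        have h1 := hpk j k hj hk
        have hk' : (0:ℚ) < -α k := by linarith
        have heq : (b k - d k) / α k = (d k - b k) / (-α k) := by
          rw [div_neg, ← neg_div, neg_sub]
        rw [heq, div_le_div_iff₀ hj hk']
        nlinarith [h1]
      -- choose x in the interval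
      set lows : Finset ℚ :=
        ((Finset.univ.filter (fun j => 0 < α j)).image (fun j => (b j - d j) / α j)) with hlows
      set ups : Finset ℚ :=
        ((Finset.univ.filter (fun j => α j < 0)).image (fun j => (b j - d j) / α j)) with hups
      set x : ℚ := if hp : lows.Nonempty then lows.max' hp
        else if hq : ups.Nonempty then ups.min' hq else 0 with hx
      have hxlow : ∀ j, 0 < α j → (b j - d j) / α j ≤ x := by
        intro j hj
        have hmem : (b j - d j) / α j ∈ lows := by
          simp only [lows, Finset.mem_image, Finset.mem_filter, Finset.mem_univ]
          exact ⟨j, ⟨trivial, hj⟩, rfl⟩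
        have hp : lows.Nonempty := ⟨_, hmem⟩
        rw [hx, dif_pos hp]
        exact Finset.le_max' _ _ hmem
      have hxup : ∀ k, α k < 0 → x ≤ (b k - d k) / α k := by
        intro k hk
        have hmem : (b k - d k) / α k ∈ ups := by
          simp only [ups, Finset.mem_image, Finset.mem_filter, Finset.mem_univ]
          exact ⟨k, ⟨trivial, hk⟩, rfl⟩
        by_cases hp : lows.Nonempty
        · rw [hx, dif_pos hp]
          obtain ⟨j, hjm, hje⟩ : ∃ j, (0 < α j) ∧ (b j - d j) / α j = lows.max' hp := by
            have := lows.max'_mem hp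
            simp only [lows, Finset.mem_image, Finset.mem_filter, Finset.mem_univ] at this
            obtain ⟨j, ⟨_, hj⟩, hje⟩ := this
            exact ⟨j, hj, hje⟩
          rw [← hje]
          exact hlb_le_ub j k hjm hk
        · have hq : ups.Nonempty := ⟨_, hmem⟩
          rw [hx, dif_neg hp, dif_pos hq]
          exact Finset.min'_le _ _ hmem
      refine ⟨Fin.snoc w x, fun j => ?_⟩
      rw [hsnoc j w x]
      rcases lt_trichotomy (α j) 0 with hj | hj | hj
      · have := hxup j hj
        rw [le_div_iff_of_neg hj] at this
        linarith [this]
      · simpa [hj] using hz j hj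
      · have := hxlow j hj
        rw [div_le_iff₀ hj] at this
        linarith [this]
    -- apply the inductive hypothesis
    obtain ⟨y', hy'0, hy'A, hy'B⟩ := ih A B hinf
    -- clean the certificate so that it vanishes on junk rows
    set y'' : J ⊕ J × J → ℚ := fun j' => if Real j' then y' j' else 0 with hy''
    have hy''0 : ∀ j', 0 ≤ y'' j' := by
      intro j'; rw [hy'']; dsimp only; split
      · exact hy'0 j'
      · exact le_refl 0
    have hy''same : ∀ (g : (J ⊕ J × J) → ℚ), (∀ j', ¬ Real j' → g j' = 0) →
        ∑ j', y'' j' * g j' = ∑ j', y' j' * g j' := by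
      intro g hg
      refine Finset.sum_congr rfl fun j' _ => ?_
      rw [hy'']; dsimp only; split
      · rfl
      · rename_i hnr; rw [hg j' hnr]; ring
    have hy''A : ∀ i, ∑ j', y'' j' * A j' i = 0 := by
      intro i
      rw [hy''same (fun j' => A j' i) (fun j' hnr => by simp [A, if_neg hnr])]
      exact hy'A i
    have hy''B : 0 < ∑ j', y'' j' * B j' := by
      rw [hy''same B (fun j' hnr => by simp [B, if_neg hnr])]
      exact hy'B
    -- the pulled-back certificate
    set y : J → ℚ := fun j => y'' (Sum.inl j)
      + (∑ k, y'' (Sum.inr (j, k)) * (-α k))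
      + (∑ p, y'' (Sum.inr (p, j)) * α p) with hy
    have hy0 : ∀ j, 0 ≤ y j := by
      intro j
      have h1 : 0 ≤ y'' (Sum.inl j) := hy''0 _
      have h2 : 0 ≤ ∑ k, y'' (Sum.inr (j, k)) * (-α k) := by
        refine Finset.sum_nonneg fun k _ => ?_
        rw [hy'']; dsimp only; split
        · rename_i hr
          exact mul_nonneg (hy'0 _) (by have := hr.2; linarith)
        · simp
      have h3 : 0 ≤ ∑ p, y'' (Sum.inr (p, j)) * α p := by
        refine Finset.sum_nonneg fun p _ => ?_
        rw [hy'']; dsimp only; split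
        · rename_i hr
          exact mul_nonneg (hy'0 _) (le_of_lt hr.1)
        · simp
      rw [hy]; dsimp only; linarith
    have master : ∀ f : J → ℚ, ∑ j, y j * f j = ∑ j', y'' j' * comb f j' := by
      intro f
      have hL : ∑ j, y j * f j
          = (∑ j, y'' (Sum.inl j) * f j)
          + (∑ j, ∑ k, y'' (Sum.inr (j, k)) * (-α k) * f j)
          + (∑ j, ∑ p, y'' (Sum.inr (p, j)) * α p * f j) := by
        simp only [hy, add_mul, Finset.sum_add_distrib, Finset.sum_mul]
      have hR : ∑ j', y'' j' * comb f j'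
          = (∑ j, y'' (Sum.inl j) * f j)
          + ((∑ p, ∑ k, y'' (Sum.inr (p, k)) * (-α k) * f p)
          + (∑ p, ∑ k, y'' (Sum.inr (p, k)) * α p * f k)) := by
        rw [Fintype.sum_sum_type, Fintype.sum_prod_type]
        congr 1
        rw [← Finset.sum_add_distrib]
        refine Finset.sum_congr rfl fun p _ => ?_
        rw [← Finset.sum_add_distrib]
        refine Finset.sum_congr rfl fun k _ => ?_
        simp only [hcomb, Sum.elim_inr]; ring
      rw [hL, hR, add_assoc]
      congr 2
      exact Finset.sum_comm
    refine ⟨y, hy0, ?_, ?_⟩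
    · intro i
      refine Fin.lastCases ?_ ?_ i
      · have hm := master α
        rw [show (∑ j, y j * a j (Fin.last n)) = ∑ j, y j * α j from rfl, hm]
        refine Finset.sum_eq_zero fun j' _ => ?_
        rcases j' with j | ⟨p, k⟩
        · rw [hy'']; dsimp only [comb, Sum.elim_inl]
          split
          · rename_i hr
            have : α j = 0 := hr
            rw [this]; ring
          · ring
        · dsimp only [comb, Sum.elim_inr]; ring
      · intro i'
        have hm := master (fun j => a' j i')
        have : ∑ j, y j * a j i'.castSucc = ∑ j, y j * a' j i' := rfl
        rw [this, hm]
        have heq : ∑ j', y'' j' * comb (fun j => a' j i') j' = ∑ j', y'' j' * A j' i' := by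
          refine Finset.sum_congr rfl fun j' _ => ?_
          rw [hy'']; dsimp only; split
          · rename_i hr; rw [hA]; dsimp only; rw [if_pos hr]
          · ring
        rw [heq]
        exact hy''A i'
    · have hm := master b
      have heq : ∑ j', y'' j' * comb b j' = ∑ j', y'' j' * B j' := by
        refine Finset.sum_congr rfl fun j' _ => ?_
        rw [hy'']; dsimp only; split
        · rename_i hr
          rw [hB]; dsimp only; rw [if_pos hr]
        · ring
      rw [hm, heq]
      exact hy''B


theorem pairQ_sum_left {ι : Type*} {n : ℕ} (t : Finset ι) (g : ι → Fin n → ℚ) (v : Fin n → ℚ) :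
    pairQ (∑ i ∈ t, g i) v = ∑ i ∈ t, pairQ (g i) v := by
  simp only [pairQ, Finset.sum_apply, Finset.sum_mul]
  exact Finset.sum_comm

theorem pairQ_smul_left {n : ℕ} (c : ℚ) (u v : Fin n → ℚ) :
    pairQ (c • u) v = c * pairQ u v := by
  simp [pairQ, Finset.mul_sum, mul_assoc]

theorem iotaQ_sum {n r : ℕ} (m : Fin r → Fin n → ℤ) (s : Fin r → ℤ) :
    ιQ (∑ i, s i • m i) = ∑ i, (s i : ℚ) • ιQ (m i) := by
  funext j
  simp only [ιQ, Finset.sum_apply, Pi.smul_apply, smul_eq_mul]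
  push_cast
  rfl

theorem den_clear (y : ℚ) (N : ℕ) (h : y.den ∣ N) : ∃ k : ℤ, (k : ℚ) = N * y := by
  obtain ⟨t, ht⟩ := h
  refine ⟨t * y.num, ?_⟩
  have hden : ((y.den : ℚ)) ≠ 0 := by
    exact_mod_cast y.den_nz
  have hnum : (y.num : ℚ) = (y.den : ℚ) * y := by
    rw [mul_comm]
    calc (y.num : ℚ) = (y.num : ℚ) / (y.den : ℚ) * (y.den : ℚ) := by
          rw [div_mul_cancel₀ _ hden]
      _ = y * (y.den : ℚ) := by rw [Rat.num_div_den]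
  push_cast [ht]
  rw [hnum]
  ring

end Helpers

/-- The key convex-geometric formula: for `(m_i, e_i) ∈ M × ℤ` with
the `m_i` nonzero and generating `M`, `Δ = {v | ⟨m_i, v⟩ ≥ -e_i ∀i}` nonempty, and
`L = ℚ_{≥0}·m ⊆ ω = Cone(m₁,…,m_r)` a half-line with primitive generator `m`, the
set `ℋ_L^*` is finite and nonempty, `min_{v ∈ Δ}⟨m, v⟩` exists, and
`min_{v ∈ Δ}⟨m, v⟩ = -min_{s ∈ ℋ_L^*} (Σ s_i e_i)/λ(s)`. -/
theorem min_over_polyhedron_via_Hilbert_basis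
    (n r : ℕ) (m : Fin r → (Fin n → ℤ)) (e : Fin r → ℤ)
    (hm0 : ∀ i, m i ≠ 0)
    (hmgen : Submodule.span ℤ (Set.range m) = (⊤ : Submodule ℤ (Fin n → ℤ)))
    -- `Δ = {v ∈ N_ℚ | ⟨m_i, v⟩ ≥ -e_i, i = 1,…,r}`, assumed nonempty
    (Δ : Set (Fin n → ℚ))
    (hΔ : Δ = {v : Fin n → ℚ | ∀ i, -(e i : ℚ) ≤ pairQ (ιQ (m i)) v})
    (hΔne : Δ.Nonempty)
    -- the half-line `L = ℚ_{≥0}·m₀` is contained in `ω = Cone(m₁,…,m_r)` and `m₀` is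
    -- the primitive generator of the semigroup `L ∩ M`
    (m₀ : Fin n → ℤ) (hm₀0 : m₀ ≠ 0)
    (hL : ιQ m₀ ∈ coneHull (Set.range fun i => ιQ (m i)))
    (hprim : ∀ m'' : Fin n → ℤ, (∃ q : ℚ, 0 ≤ q ∧ ιQ m'' = q • ιQ m₀) →
      ∃ c : ℕ, m'' = c • m₀)
    -- `ℋ_L` : the Hilbert basis of `p⁻¹(L) ∩ (ℚ_{≥0})^r` in the lattice `ℤ^r`
    (inTau : (Fin r → ℤ) → Prop)
    (hτ : ∀ s : Fin r → ℤ, inTau s ↔ ((∀ i, 0 ≤ s i) ∧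
      ∃ q : ℚ, 0 ≤ q ∧ (∑ i, (s i : ℚ) • ιQ (m i)) = q • ιQ m₀))
    (HB HBstar : Set (Fin r → ℤ))
    (hHB : HB = {s | s ≠ 0 ∧ inTau s ∧
      ¬∃ s₁ s₂ : Fin r → ℤ, s₁ ≠ 0 ∧ s₂ ≠ 0 ∧ inTau s₁ ∧ inTau s₂ ∧ s = s₁ + s₂})
    (hHBstar : HBstar = {s ∈ HB | (∑ i, s i • m i) ≠ 0}) :
    -- `ℋ_L^*` is finite and nonempty
    HBstar.Finite ∧ HBstar.Nonempty ∧
    -- `λ(s)` exists uniquely for `s ∈ ℋ_L^*`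
    (∀ s ∈ HBstar, ∃! lam : ℤ, 0 < lam ∧ (∑ i, s i • m i) = lam • m₀) ∧
    -- `min_{v∈Δ}⟨m₀, v⟩` exists and equals `-min_{s∈ℋ_L^*}(Σ s_i e_i)/λ(s)`
    (∃ μ : ℚ, IsLeast ((fun v => pairQ (ιQ m₀) v) '' Δ) μ ∧
      IsLeast {q : ℚ | ∃ s ∈ HBstar, ∃ lam : ℤ, 0 < lam ∧ (∑ i, s i • m i) = lam • m₀ ∧
        q = (∑ i, (s i : ℚ) * (e i : ℚ)) / (lam : ℚ)} (-μ)) := by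
  classical
  -- a coordinate where m₀ is nonzero
  obtain ⟨j₀, hj₀⟩ : ∃ j, m₀ j ≠ 0 := by
    by_contra hc
    push_neg at hc
    exact hm₀0 (funext hc)
  have hj₀Q : ((m₀ j₀ : ℚ)) ≠ 0 := Int.cast_ne_zero.mpr hj₀
  have huniq : ∀ q q' : ℚ, q • ιQ m₀ = q' • ιQ m₀ → q = q' := by
    intro q q' h
    have := congrFun h j₀
    simp only [Pi.smul_apply, smul_eq_mul, ιQ] at this
    exact mul_right_cancel₀ hj₀Q this
  -- the multiplier function C
  have hCex : ∀ s : Fin r → ℤ, inTau s → ∃ c : ℕ, (∑ i, s i • m i) = (c : ℤ) • m₀ := by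
    intro s hs
    obtain ⟨-, q, hq0, hq⟩ := (hτ s).mp hs
    obtain ⟨c, hc⟩ := hprim (∑ i, s i • m i) ⟨q, hq0, by rw [iotaQ_sum]; exact hq⟩
    exact ⟨c, by rw [hc]; ext j; simp [zsmul_eq_mul]⟩
  set C : (Fin r → ℤ) → ℕ := fun s =>
    if h : ∃ c : ℕ, (∑ i, s i • m i) = (c : ℤ) • m₀ then h.choose else 0 with hC
  have hCspec : ∀ s, inTau s → (∑ i, s i • m i) = ((C s : ℤ)) • m₀ := by
    intro s hs
    rw [hC]
    dsimp only
    rw [dif_pos (hCex s hs)]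
    exact (hCex s hs).choose_spec
  have hQrel : ∀ s, inTau s → ∑ i, (s i : ℚ) • ιQ (m i) = (C s : ℚ) • ιQ m₀ := by
    intro s hs
    rw [← iotaQ_sum, hCspec s hs]
    funext j
    simp only [ιQ, Pi.smul_apply, smul_eq_mul, zsmul_eq_mul]
    push_cast
    ring
  have hCuniqZ : ∀ (s : Fin r → ℤ) (lam : ℤ), inTau s → (∑ i, s i • m i) = lam • m₀ →
      lam = (C s : ℤ) := by
    intro s lam hs h
    have h2 := hCspec s hs
    rw [h] at h2
    have := congrFun h2 j₀
    simp only [Pi.smul_apply, smul_eq_mul] at this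
    exact mul_right_cancel₀ hj₀ this
  -- the linear functional E
  set E : (Fin r → ℤ) → ℚ := fun s => ∑ i, (s i : ℚ) * (e i : ℚ) with hEdef
  -- the basic pairing inequality
  have hPv : ∀ v ∈ Δ, ∀ s, inTau s → -(E s) ≤ (C s : ℚ) * pairQ (ιQ m₀) v := by
    intro v hv s hs
    have h1 : (C s : ℚ) * pairQ (ιQ m₀) v = ∑ i, (s i : ℚ) * pairQ (ιQ (m i)) v := by
      rw [← pairQ_smul_left, ← hQrel s hs, pairQ_sum_left]
      exact Finset.sum_congr rfl fun i _ => pairQ_smul_left _ _ _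
    rw [hΔ] at hv
    have hsnn := ((hτ s).mp hs).1
    have h2 : ∀ i : Fin r, (s i : ℚ) * (-(e i : ℚ)) ≤ (s i : ℚ) * pairQ (ιQ (m i)) v := by
      intro i
      exact mul_le_mul_of_nonneg_left (hv i) (by exact_mod_cast hsnn i)
    calc -(E s) = ∑ i, (s i : ℚ) * (-(e i : ℚ)) := by
          rw [hEdef]; dsimp only; rw [← Finset.sum_neg_distrib]
          exact Finset.sum_congr rfl fun i _ => by ring
      _ ≤ ∑ i, (s i : ℚ) * pairQ (ιQ (m i)) v := Finset.sum_le_sum fun i _ => h2 i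
      _ = (C s : ℚ) * pairQ (ιQ m₀) v := h1.symm
  -- basic facts about τ
  have htau_add : ∀ s t : Fin r → ℤ, inTau s → inTau t → inTau (s + t) := by
    intro s t hs ht
    obtain ⟨hs0, q, hq0, hq⟩ := (hτ s).mp hs
    obtain ⟨ht0, p, hp0, hp⟩ := (hτ t).mp ht
    refine (hτ (s + t)).mpr ⟨fun i => by have := hs0 i; have := ht0 i; simp only [Pi.add_apply]; omega,
      q + p, by linarith, ?_⟩
    have : ∑ i, ((((s + t) i : ℤ) : ℚ)) • ιQ (m i)
        = ∑ i, ((s i : ℚ) • ιQ (m i) + (t i : ℚ) • ιQ (m i)) := by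
      refine Finset.sum_congr rfl fun i _ => ?_
      simp only [Pi.add_apply]
      push_cast
      rw [add_smul]
    rw [this, Finset.sum_add_distrib, hq, hp, add_smul]
  have hCadd : ∀ s t : Fin r → ℤ, inTau s → inTau t → C (s + t) = C s + C t := by
    intro s t hs ht
    have h1 : (∑ i, (s + t) i • m i) = ((C s + C t : ℕ) : ℤ) • m₀ := by
      have : (∑ i, (s + t) i • m i) = (∑ i, s i • m i) + ∑ i, t i • m i := by
        rw [← Finset.sum_add_distrib]
        exact Finset.sum_congr rfl fun i _ => by simp [Pi.add_apply, add_smul]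
      rw [this, hCspec s hs, hCspec t ht, ← add_smul]
      push_cast
      ring_nf
    have := hCuniqZ (s + t) ((C s + C t : ℕ) : ℤ) (htau_add s t hs ht) h1
    exact_mod_cast this.symm
  -- Lemma A : on the kernel of the ray, E is nonnegative (since Δ ≠ ∅)
  have hA0 : ∀ s, inTau s → C s = 0 → 0 ≤ E s := by
    obtain ⟨v, hv⟩ := hΔne
    intro s hs h0
    have := hPv v hv s hs
    rw [h0] at this
    simp only [Nat.cast_zero, zero_mul] at this
    linarith
  -- membership rephrasings
  have hHBstar_mem : ∀ t, t ∈ HBstar ↔ t ∈ HB ∧ (∑ i, t i • m i) ≠ 0 := by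
    intro t
    rw [hHBstar]
    exact Iff.rfl
  have hHBtau : ∀ t, t ∈ HB → inTau t := by
    intro t ht
    rw [hHB] at ht
    exact ht.2.1
  have hHBne0 : ∀ t, t ∈ HB → t ≠ 0 := by
    intro t ht
    rw [hHB] at ht
    exact ht.1
  have hCpos : ∀ t, t ∈ HBstar → 0 < C t := by
    intro t ht
    obtain ⟨htHB, htne⟩ := (hHBstar_mem t).mp ht
    rcases Nat.eq_zero_or_pos (C t) with h | h
    · exfalso
      apply htne
      rw [hCspec t (hHBtau t htHB), h]
      simp
    · exact h
  have hsum_ne : ∀ t, inTau t → 0 < C t → (∑ i, t i • m i) ≠ 0 := by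
    intro t ht hc h0
    rw [hCspec t ht] at h0
    have := congrFun h0 j₀
    simp only [Pi.smul_apply, smul_eq_mul, Pi.zero_apply, mul_eq_zero] at this
    rcases this with h | h
    · omega
    · exact hj₀ h
  -- nonzero elements of τ have positive ℓ¹-size
  have hmeasure_pos : ∀ u : Fin r → ℤ, inTau u → u ≠ 0 → 0 < ∑ i, (u i).toNat := by
    intro u hu hne
    have hnn := ((hτ u).mp hu).1
    obtain ⟨i, hi⟩ : ∃ i, u i ≠ 0 := by
      by_contra hc
      push_neg at hc
      exact hne (funext hc)
    have h1 : 0 < (u i).toNat := by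
      have := hnn i
      omega
    calc 0 < (u i).toNat := h1
      _ ≤ ∑ i, (u i).toNat :=
        Finset.single_le_sum (f := fun i => (u i).toNat) (fun j _ => Nat.zero_le _)
          (Finset.mem_univ i)
  -- the key induction : every element of τ with positive multiplier dominates
  -- some Hilbert basis element in ratio
  have key : ∀ N : ℕ, ∀ s : Fin r → ℤ, (∑ i, (s i).toNat) = N → inTau s → 0 < C s →
      ∃ t ∈ HBstar, E t / (C t : ℚ) ≤ E s / (C s : ℚ) := by
    intro N
    induction N using Nat.strong_induction_on with
    | _ N ih =>
    intro s hN hs hc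
    by_cases hmem : s ∈ HB
    · exact ⟨s, (hHBstar_mem s).mpr ⟨hmem, hsum_ne s hs hc⟩, le_refl _⟩
    · have hsne : s ≠ 0 := by
        intro h0
        have : (0 : ℤ) = (C s : ℤ) := hCuniqZ s 0 hs (by rw [h0]; simp)
        omega
      rw [hHB] at hmem
      simp only [Set.mem_setOf_eq, not_and, not_not] at hmem
      obtain ⟨s₁, s₂, h1ne, h2ne, h1τ, h2τ, hsum⟩ := hmem hsne hs
      have hnn1 := ((hτ s₁).mp h1τ).1
      have hnn2 := ((hτ s₂).mp h2τ).1
      have hμadd : (∑ i, (s i).toNat) = (∑ i, (s₁ i).toNat) + ∑ i, (s₂ i).toNat := by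
        rw [← Finset.sum_add_distrib]
        refine Finset.sum_congr rfl fun i _ => ?_
        rw [hsum]
        simp only [Pi.add_apply]
        have := hnn1 i
        have := hnn2 i
        omega
      have hμ1 : (∑ i, (s₁ i).toNat) < N := by
        have := hmeasure_pos s₂ h2τ h2ne
        omega
      have hμ2 : (∑ i, (s₂ i).toNat) < N := by
        have := hmeasure_pos s₁ h1τ h1ne
        omega
      have hEadd : E s = E s₁ + E s₂ := by
        rw [hEdef]
        dsimp only
        rw [← Finset.sum_add_distrib]
        refine Finset.sum_congr rfl fun i _ => ?_
        rw [hsum]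
        simp only [Pi.add_apply]
        push_cast
        ring
      have hCs : C s = C s₁ + C s₂ := by
        rw [hsum]
        exact hCadd s₁ s₂ h1τ h2τ
      rcases Nat.eq_zero_or_pos (C s₁) with hc1 | hc1
      · -- C s₁ = 0, so C s₂ = C s > 0
        have hc2 : 0 < C s₂ := by omega
        obtain ⟨t, ht, hle⟩ := ih _ hμ2 s₂ rfl h2τ hc2
        refine ⟨t, ht, le_trans hle ?_⟩
        have hE1 : 0 ≤ E s₁ := hA0 s₁ h1τ hc1
        have hc2Q : (0:ℚ) < (C s₂ : ℚ) := by exact_mod_cast hc2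
        rw [hEadd, hCs, hc1, zero_add, div_le_div_iff₀ hc2Q hc2Q]
        nlinarith [hE1, hc2Q]
      · rcases Nat.eq_zero_or_pos (C s₂) with hc2 | hc2
        · obtain ⟨t, ht, hle⟩ := ih _ hμ1 s₁ rfl h1τ hc1
          refine ⟨t, ht, le_trans hle ?_⟩
          have hE2 : 0 ≤ E s₂ := hA0 s₂ h2τ hc2
          have hc1Q : (0:ℚ) < (C s₁ : ℚ) := by exact_mod_cast hc1
          rw [hEadd, hCs, hc2, add_zero, div_le_div_iff₀ hc1Q hc1Q]
          nlinarith [hE2, hc1Q]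
        · -- mediant case
          have hc1Q : (0:ℚ) < (C s₁ : ℚ) := by exact_mod_cast hc1
          have hc2Q : (0:ℚ) < (C s₂ : ℚ) := by exact_mod_cast hc2
          rcases le_total (E s₁ / (C s₁ : ℚ)) (E s₂ / (C s₂ : ℚ)) with hcmp | hcmp
          · obtain ⟨t, ht, hle⟩ := ih _ hμ1 s₁ rfl h1τ hc1
            refine ⟨t, ht, le_trans hle ?_⟩
            have target : E s₁ / (C s₁ : ℚ) ≤ (E s₁ + E s₂) / ((C s₁ : ℚ) + (C s₂ : ℚ)) := by
              rw [div_le_div_iff₀ hc1Q (by linarith)]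
              rw [div_le_div_iff₀ hc1Q hc2Q] at hcmp
              nlinarith [hcmp]
            rw [hEadd, hCs]
            push_cast
            exact target
          · obtain ⟨t, ht, hle⟩ := ih _ hμ2 s₂ rfl h2τ hc2
            refine ⟨t, ht, le_trans hle ?_⟩
            have target : E s₂ / (C s₂ : ℚ) ≤ (E s₁ + E s₂) / ((C s₁ : ℚ) + (C s₂ : ℚ)) := by
              rw [div_le_div_iff₀ hc2Q (by linarith)]
              rw [div_le_div_iff₀ hc2Q hc1Q] at hcmp
              nlinarith [hcmp]
            rw [hEadd, hCs]
            push_cast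
            exact target
  -- nonemptiness : clear denominators in the expression of m₀ as a conic combination
  have hHBstar_ne : HBstar.Nonempty := by
    obtain ⟨T, c, hTsub, hc0, hTsum⟩ := hL
    -- T is nonempty, so Fin r is nonempty
    have hT_or : ∀ x ∈ T, ∃ i, ιQ (m i) = x := by
      intro x hx
      have := hTsub hx
      obtain ⟨i, hi⟩ := this
      exact ⟨i, hi⟩
    have hTne : T.Nonempty := by
      by_contra hTe
      rw [Finset.not_nonempty_iff_eq_empty] at hTe
      rw [hTe] at hTsum
      simp only [Finset.sum_empty] at hTsum
      apply hj₀Q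
      have := congrFun hTsum j₀
      simpa [ιQ] using this
    obtain ⟨x₀, hx₀⟩ := hTne
    obtain ⟨i₀, -⟩ := hT_or x₀ hx₀
    set g : (Fin n → ℚ) → Fin r := fun x => if h : ∃ i, ιQ (m i) = x then h.choose else i₀
      with hg
    have hgspec : ∀ x ∈ T, ιQ (m (g x)) = x := by
      intro x hx
      rw [hg]
      dsimp only
      rw [dif_pos (hT_or x hx)]
      exact (hT_or x hx).choose_spec
    set y : Fin r → ℚ := fun i => ∑ x ∈ T.filter (fun x => g x = i), c x with hy
    have hy0 : ∀ i, 0 ≤ y i := fun i => Finset.sum_nonneg fun x _ => hc0 x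
    have hysum : ∑ i, y i • ιQ (m i) = ιQ m₀ := by
      rw [hy]
      have : ∀ i : Fin r, (∑ x ∈ T.filter (fun x => g x = i), c x) • ιQ (m i)
          = ∑ x ∈ T.filter (fun x => g x = i), c x • x := by
        intro i
        rw [Finset.sum_smul]
        refine Finset.sum_congr rfl fun x hx => ?_
        rw [Finset.mem_filter] at hx
        rw [← hx.2, hgspec x hx.1]
      dsimp only
      rw [Finset.sum_congr rfl fun i _ => this i,
        Finset.sum_fiberwise_of_maps_to (fun x _ => Finset.mem_univ (g x)), hTsum]
    -- clear denominators
    set N : ℕ := ∏ i, (y i).den with hN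
    have hNpos : 0 < N := Finset.prod_pos fun i _ => (y i).pos
    have hclear : ∀ i : Fin r, ∃ k : ℤ, (k : ℚ) = N * y i := by
      intro i
      exact den_clear (y i) N (Finset.dvd_prod_of_mem _ (Finset.mem_univ i))
    set sv : Fin r → ℤ := fun i => (hclear i).choose with hsv
    have hsvspec : ∀ i, ((sv i : ℚ)) = N * y i := fun i => (hclear i).choose_spec
    have hsv0 : ∀ i, 0 ≤ sv i := by
      intro i
      have : (0:ℚ) ≤ (sv i : ℚ) := by
        rw [hsvspec i]
        exact mul_nonneg (by positivity) (hy0 i)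
      exact_mod_cast this
    have hsvQ : ∑ i, ((sv i : ℚ)) • ιQ (m i) = (N : ℚ) • ιQ m₀ := by
      have h1 : ∑ i, ((sv i : ℚ)) • ιQ (m i) = ∑ i, ((N : ℚ) * y i) • ιQ (m i) :=
        Finset.sum_congr rfl fun i _ => by rw [hsvspec i]
      rw [h1]
      calc ∑ i, ((N : ℚ) * y i) • ιQ (m i) = (N : ℚ) • ∑ i, y i • ιQ (m i) := by
            rw [Finset.smul_sum]
            exact Finset.sum_congr rfl fun i _ => (mul_smul _ _ _)
        _ = (N : ℚ) • ιQ m₀ := by rw [hysum]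
    have hsvτ : inTau sv := (hτ sv).mpr ⟨hsv0, (N : ℚ), by positivity, hsvQ⟩
    have hCsv : C sv = N := by
      have h3 := hQrel sv hsvτ
      rw [hsvQ] at h3
      exact_mod_cast (huniq _ _ h3.symm)
    have hCsvpos : 0 < C sv := by rw [hCsv]; exact hNpos
    obtain ⟨t, ht, -⟩ := key _ sv rfl hsvτ hCsvpos
    exact ⟨t, ht⟩
  -- finiteness via Dickson's lemma : the Hilbert basis maps to an antichain in ℕʳ × ℕ
  have hHBstar_fin : HBstar.Finite := by
    set Φ : (Fin r → ℤ) → (Fin r → ℕ) × ℕ := fun s => (fun i => (s i).toNat, C s) with hΦ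
    have hinj : Set.InjOn Φ HBstar := by
      intro s hs t ht hst
      have hnns := ((hτ s).mp (hHBtau s ((hHBstar_mem s).mp hs).1)).1
      have hnnt := ((hτ t).mp (hHBtau t ((hHBstar_mem t).mp ht).1)).1
      funext i
      have := congrFun (congrArg Prod.fst hst) i
      simp only [hΦ] at this
      have h1 := hnns i
      have h2 := hnnt i
      omega
    have hanti : IsAntichain (· ≤ ·) (Φ '' HBstar) := by
      rintro - ⟨s, hs, rfl⟩ - ⟨t, ht, rfl⟩ hne hle
      have hst : s ≠ t := fun h => hne (by rw [h])
      obtain ⟨hsHB, -⟩ := (hHBstar_mem s).mp hs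
      obtain ⟨htHB, -⟩ := (hHBstar_mem t).mp ht
      have hsτ := hHBtau s hsHB
      have htτ := hHBtau t htHB
      have hnns := ((hτ s).mp hsτ).1
      have hnnt := ((hτ t).mp htτ).1
      obtain ⟨hle1, hle2⟩ := Prod.le_def.mp hle
      have hcomp : ∀ i, s i ≤ t i := by
        intro i
        have := hle1 i
        simp only [hΦ] at this
        have h1 := hnns i
        have h2 := hnnt i
        omega
      have hCle : C s ≤ C t := hle2
      -- then t = s + (t - s) is a nontrivial decomposition
      set u : Fin r → ℤ := t - s with hu
      have hune : u ≠ 0 := by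
        intro h0
        apply hst
        funext i
        have := congrFun h0 i
        simp only [hu, Pi.sub_apply, Pi.zero_apply, sub_eq_zero] at this
        omega
      have huτ : inTau u := by
        refine (hτ u).mpr ⟨fun i => by simp only [hu, Pi.sub_apply]; have := hcomp i; omega,
          (C t : ℚ) - (C s : ℚ), sub_nonneg.mpr (by exact_mod_cast hCle), ?_⟩
        have h1 : ∑ i, ((u i : ℚ)) • ιQ (m i)
            = (∑ i, ((t i : ℚ)) • ιQ (m i)) - ∑ i, ((s i : ℚ)) • ιQ (m i) := by
          rw [← Finset.sum_sub_distrib]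
          refine Finset.sum_congr rfl fun i _ => ?_
          simp only [hu, Pi.sub_apply]
          push_cast
          rw [sub_smul]
        rw [h1, hQrel t htτ, hQrel s hsτ, sub_smul]
      have hdecomp : t = s + u := by
        funext i
        simp [hu]
      rw [hHB] at htHB
      exact htHB.2.2 ⟨s, u, hHBne0 s hsHB, hune, hsτ, huτ, hdecomp⟩
    have hpwo : (Φ '' HBstar).IsPWO := by
      have h1 : (Set.univ : Set ((Fin r → ℕ) × ℕ)).IsPWO := by
        have hp : (Set.univ : Set (Fin r → ℕ)).IsPWO :=
          Set.isPWO_of_wellQuasiOrderedLE _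
        have hq : (Set.univ : Set ℕ).IsPWO := (Set.isWF_univ_iff.mpr (inferInstance : WellFoundedLT ℕ)).isPWO
        have := hp.prod hq
        simpa [Set.univ_prod_univ] using this
      exact h1.mono (Set.subset_univ _)
    have himfin : (Φ '' HBstar).Finite := hanti.finite_of_partiallyWellOrderedOn hpwo
    exact Set.Finite.of_finite_image himfin hinj
  -- the minimum ratio
  set F : Finset (Fin r → ℤ) := hHBstar_fin.toFinset with hF
  have hFne : F.Nonempty := by
    rw [hF, Set.Finite.toFinset_nonempty]
    exact hHBstar_ne
  set ρ : (Fin r → ℤ) → ℚ := fun s => E s / (C s : ℚ) with hρ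
  set R : Finset ℚ := F.image ρ with hR
  have hRne : R.Nonempty := hFne.image ρ
  set μstar : ℚ := R.min' hRne with hμstar
  have hμmem : ∃ t ∈ HBstar, ρ t = μstar := by
    obtain ⟨t, htF, ht⟩ := Finset.mem_image.mp (R.min'_mem hRne)
    exact ⟨t, (Set.Finite.mem_toFinset _).mp htF, ht⟩
  have hμle : ∀ t ∈ HBstar, μstar ≤ ρ t := fun t ht =>
    R.min'_le _ (Finset.mem_image_of_mem ρ ((Set.Finite.mem_toFinset _).mpr ht))
  -- the lower bound on Δ
  have hlower : ∀ v ∈ Δ, -μstar ≤ pairQ (ιQ m₀) v := by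
    intro v hv
    obtain ⟨t, ht, hteq⟩ := hμmem
    have htτ := hHBtau t ((hHBstar_mem t).mp ht).1
    have h1 := hPv v hv t htτ
    have hct : (0:ℚ) < (C t : ℚ) := by exact_mod_cast hCpos t ht
    rw [← hteq, hρ]
    dsimp only
    have h4 : -(E t / (C t : ℚ)) = (-(E t)) / (C t : ℚ) := by ring
    rw [h4, div_le_iff₀ hct, mul_comm]
    linarith [h1]
  -- attainment via Farkas' lemma
  set aa : Option (Fin r) → Fin n → ℚ :=
    fun j => j.elim (fun co => -(ιQ m₀ co)) (fun i => ιQ (m i)) with haa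
  set bb : Option (Fin r) → ℚ := fun j => j.elim μstar (fun i => -(e i : ℚ)) with hbb
  have hattain : ∃ v ∈ Δ, pairQ (ιQ m₀) v = -μstar := by
    by_cases hfeas : ∃ v : Fin n → ℚ, ∀ j : Option (Fin r), bb j ≤ ∑ co, aa j co * v co
    · obtain ⟨v, hv⟩ := hfeas
      have hvΔ : v ∈ Δ := by
        rw [hΔ]
        intro i
        have := hv (some i)
        simpa [haa, hbb, pairQ] using this
      have h2 := hv none
      simp only [haa, hbb, Option.elim] at h2
      have h3 : (∑ co, -(ιQ m₀ co) * v co) = - pairQ (ιQ m₀) v := by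
        rw [pairQ, ← Finset.sum_neg_distrib]
        exact Finset.sum_congr rfl fun co _ => by ring
      rw [h3] at h2
      exact ⟨v, hvΔ, le_antisymm (by linarith) (hlower v hvΔ)⟩
    · exfalso
      obtain ⟨y, hy0, hyA, hyB⟩ := myFarkas n aa bb hfeas
      set z : ℚ := y none with hz
      have hz0 : 0 ≤ z := hy0 none
      have hvec : ∀ co, ∑ i, y (some i) * ιQ (m i) co = z * ιQ m₀ co := by
        intro co
        have := hyA co
        rw [Fintype.sum_option] at this
        simp only [haa, Option.elim] at this
        rw [hz]
        linarith [this]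
      have hineq : ∑ i, y (some i) * (e i : ℚ) < z * μstar := by
        have := hyB
        rw [Fintype.sum_option] at this
        simp only [hbb, Option.elim] at this
        have h5 : ∑ i, y (some i) * (-(e i : ℚ)) = -∑ i, y (some i) * (e i : ℚ) := by
          rw [← Finset.sum_neg_distrib]
          exact Finset.sum_congr rfl fun i _ => by ring
        rw [h5] at this
        rw [hz]
        linarith [this]
      -- clear denominators
      set N : ℕ := ∏ i, (y (some i)).den with hN
      have hNpos : 0 < N := Finset.prod_pos fun i _ => (y (some i)).pos
      have hNQ : (0:ℚ) < (N : ℚ) := by exact_mod_cast hNpos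
      have hclear : ∀ i : Fin r, ∃ k : ℤ, (k : ℚ) = N * y (some i) := fun i =>
        den_clear (y (some i)) N (Finset.dvd_prod_of_mem _ (Finset.mem_univ i))
      set sv : Fin r → ℤ := fun i => (hclear i).choose with hsv
      have hsvspec : ∀ i, ((sv i : ℚ)) = N * y (some i) := fun i => (hclear i).choose_spec
      have hsv0 : ∀ i, 0 ≤ sv i := by
        intro i
        have : (0:ℚ) ≤ (sv i : ℚ) := by
          rw [hsvspec i]
          exact mul_nonneg (by positivity) (hy0 (some i))
        exact_mod_cast this
      have hsQ : ∑ i, ((sv i : ℚ)) • ιQ (m i) = ((N : ℚ) * z) • ιQ m₀ := by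
        funext co
        simp only [Finset.sum_apply, Pi.smul_apply, smul_eq_mul]
        calc ∑ i, (sv i : ℚ) * ιQ (m i) co = ∑ i, (N : ℚ) * (y (some i) * ιQ (m i) co) := by
              refine Finset.sum_congr rfl fun i _ => ?_
              rw [hsvspec i]
              ring
          _ = (N : ℚ) * ∑ i, y (some i) * ιQ (m i) co := by rw [Finset.mul_sum]
          _ = (N : ℚ) * (z * ιQ m₀ co) := by rw [hvec co]
          _ = ((N : ℚ) * z) * ιQ m₀ co := by ring
      have hsvτ : inTau sv :=
        (hτ sv).mpr ⟨hsv0, (N : ℚ) * z, mul_nonneg (le_of_lt hNQ) hz0, hsQ⟩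
      have hCsQ : ((C sv : ℕ) : ℚ) = (N : ℚ) * z := by
        have h3 := hQrel sv hsvτ
        rw [hsQ] at h3
        exact huniq _ _ h3.symm
      have hEs : E sv = (N : ℚ) * ∑ i, y (some i) * (e i : ℚ) := by
        rw [hEdef]
        dsimp only
        rw [Finset.mul_sum]
        refine Finset.sum_congr rfl fun i _ => ?_
        rw [hsvspec i]
        ring
      rcases eq_or_lt_of_le hz0 with hzz | hzz
      · -- z = 0 : contradiction with Lemma A
        have hC0 : C sv = 0 := by
          have : ((C sv : ℕ) : ℚ) = 0 := by rw [hCsQ, ← hzz]; ring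
          exact_mod_cast this
        have := hA0 sv hsvτ hC0
        rw [hEs] at this
        have h6 : ∑ i, y (some i) * (e i : ℚ) < 0 := by
          rw [← hzz] at hineq
          linarith [hineq]
        nlinarith [hNQ, h6, this]
      · -- z > 0 : contradiction with the key lemma
        have hCpos' : 0 < C sv := by
          have : (0:ℚ) < ((C sv : ℕ) : ℚ) := by
            rw [hCsQ]
            positivity
          exact_mod_cast this
        obtain ⟨t, ht, hle⟩ := key _ sv rfl hsvτ hCpos'
        have h7 : E sv / ((C sv : ℕ) : ℚ) < μstar := by
          rw [hEs, hCsQ]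
          rw [mul_div_mul_left _ _ (ne_of_gt hNQ)]
          rw [div_lt_iff₀ hzz]
          linarith [hineq]
        have h8 := hμle t ht
        rw [hρ] at h8
        dsimp only at h8
        linarith [hle, h7, h8]
  -- final assembly
  obtain ⟨v₀, hv₀Δ, hv₀eq⟩ := hattain
  refine ⟨hHBstar_fin, hHBstar_ne, ?_, ⟨-μstar, ⟨⟨v₀, hv₀Δ, hv₀eq⟩, ?_⟩, ?_⟩⟩
  · -- existence and uniqueness of λ(s)
    intro s hs
    have hsτ := hHBtau s ((hHBstar_mem s).mp hs).1
    refine ⟨(C s : ℤ), ⟨by exact_mod_cast hCpos s hs, hCspec s hsτ⟩, ?_⟩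
    rintro lam ⟨-, hlameq⟩
    exact hCuniqZ s lam hsτ hlameq
  · -- lower bound for the image
    rintro q ⟨v, hv, rfl⟩
    exact hlower v hv
  · -- IsLeast of the ratio set
    rw [neg_neg]
    constructor
    · obtain ⟨t, ht, hteq⟩ := hμmem
      have htτ := hHBtau t ((hHBstar_mem t).mp ht).1
      refine ⟨t, ht, (C t : ℤ), by exact_mod_cast hCpos t ht, hCspec t htτ, ?_⟩
      rw [← hteq]
      show E t / ((C t : ℕ) : ℚ) = E t / (((C t : ℕ) : ℤ) : ℚ)
      norm_cast
    · rintro q ⟨s, hs, lam, hlampos, hlameq, rfl⟩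
      have hsτ := hHBtau s ((hHBstar_mem s).mp hs).1
      have hlam : lam = (C s : ℤ) := hCuniqZ s lam hsτ hlameq
      have hub := hμle s hs
      have hcast : ((((C s : ℕ)) : ℤ) : ℚ) = ((C s : ℕ) : ℚ) := by norm_cast
      rw [hlam, hcast]
      exact hub
end

section
/- Let E/k be a finite Galois extension of fields with Galois group G, and let B be an integral domain that is a finitely generated E-algebra, normal (integrally closed in its fraction field), equipped with a semi-linear G-action, i.e. G acts on B by k-algebra automorphisms such that g·(λ b) = g(λ)·(g·b) for all g ∈ G, λ ∈ E, b ∈ B. Then the ring of invariants R = B^G is a finitely generated normal k-algebra, and the natural multiplication map R ⊗_k E → B is an isomorphism of E-algebras. -/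
open scoped TensorProduct

set_option maxHeartbeats 1000000
set_option synthInstance.maxHeartbeats 400000


lemma aux_fix {k E : Type*} [Field k] [Field E] [Algebra k E]
    [FiniteDimensional k E] [IsGalois k E] (x : E)
    (hx : ∀ g : E ≃ₐ[k] E, g x = x) : ∃ a : k, algebraMap k E a = x := by
  have h1 : IntermediateField.fixedField (⊤ : Subgroup (E ≃ₐ[k] E)) = ⊥ :=
    ((IsGalois.tfae (F := k) (E := E)).out 0 1).mp (inferInstance : IsGalois k E)
  have h2 : x ∈ IntermediateField.fixedField (⊤ : Subgroup (E ≃ₐ[k] E)) := fun g => hx g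
  rw [h1, IntermediateField.mem_bot] at h2
  exact h2

/-- k-linearly independent invariant elements are E-linearly independent. -/
lemma aux_li {k E B : Type*} [Field k] [Field E] [Algebra k E]
    [FiniteDimensional k E] [IsGalois k E]
    [CommRing B] [IsDomain B] [Algebra E B] [Algebra k B] [IsScalarTower k E B]
    (ρ : (E ≃ₐ[k] E) →* (B ≃ₐ[k] B))
    (hsemi : ∀ (g : E ≃ₐ[k] E) (lam : E) (b : B), ρ g (lam • b) = g lam • ρ g b)
    {ι : Type*} (r : ι → B) (hr : ∀ g i, ρ g (r i) = r i)
    (hli : LinearIndependent k r) : LinearIndependent E r := by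
  classical
  rw [linearIndependent_iff']
  intro s
  induction s using Finset.strongInduction with
  | _ s ih =>
    intro c hc i his
    by_contra hne
    set d : ι → E := fun j => (c i)⁻¹ * c j with hd
    have hd0 : ∑ j ∈ s, d j • r j = 0 := by
      have := congrArg (fun b : B => (c i)⁻¹ • b) hc
      simpa [Finset.smul_sum, smul_smul, hd] using this
    have hdi : d i = 1 := inv_mul_cancel₀ hne
    -- apply each g
    have hg0 : ∀ g : E ≃ₐ[k] E, ∑ j ∈ s, (g (d j) - d j) • r j = 0 := by
      intro g
      have h1 : ∑ j ∈ s, g (d j) • r j = 0 := by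
        have := congrArg (ρ g) hd0
        rw [map_sum] at this
        simpa [hsemi, hr] using this
      have := sub_eq_zero.mpr (h1.trans hd0.symm)
      rw [← Finset.sum_sub_distrib] at this
      simpa [sub_smul] using this
    -- the i-th coefficient vanishes, so induction applies on s.erase i
    have hfixed : ∀ j ∈ s, ∀ g : E ≃ₐ[k] E, g (d j) = d j := by
      intro j hjs g
      rcases eq_or_ne j i with rfl | hji
      · simp [hdi]
      · have hsum : ∑ l ∈ s.erase i, (g (d l) - d l) • r l = 0 := by
          have := hg0 g
          rwa [← Finset.add_sum_erase s _ his, hdi, map_one, sub_self, zero_smul, zero_add]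
            at this
        have := ih (s.erase i) (Finset.erase_ssubset his) _ hsum j
          (Finset.mem_erase.mpr ⟨hji, hjs⟩)
        exact sub_eq_zero.mp this
    -- hence all coefficients lie in k
    have hds : ∀ j ∈ s, ∃ a : k, algebraMap k E a = d j := fun j hj =>
      aux_fix (d j) (hfixed j hj)
    choose a ha using hds
    set a' : ι → k := fun j => if h : j ∈ s then a j h else 0 with ha'
    have hsum : ∑ j ∈ s, a' j • r j = 0 := by
      rw [← hd0]
      refine Finset.sum_congr rfl fun j hj => ?_
      have haj : a' j = a j hj := by simp only [ha', dif_pos hj]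
      rw [haj, ← ha j hj, algebraMap_smul]
    have := linearIndependent_iff'.mp hli s a' hsum i his
    rw [show a' i = a i his by simp only [ha', dif_pos his]] at this
    have : (1 : E) = 0 := by
      rw [← hdi, ← ha i his, this, map_zero]
    exact one_ne_zero this

lemma aux_span {k E B : Type*} [Field k] [Field E] [Algebra k E]
    [FiniteDimensional k E] [IsGalois k E]
    [CommRing B] [IsDomain B] [Algebra E B] [Algebra k B] [IsScalarTower k E B]
    (ρ : (E ≃ₐ[k] E) →* (B ≃ₐ[k] B))
    (hsemi : ∀ (g : E ≃ₐ[k] E) (lam : E) (b : B), ρ g (lam • b) = g lam • ρ g b)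
    (b : B) : b ∈ Submodule.span E {x : B | ∀ g : E ≃ₐ[k] E, ρ g x = x} := by
  classical
  by_contra hb
  set p := Submodule.span E {x : B | ∀ g : E ≃ₐ[k] E, ρ g x = x} with hp
  obtain ⟨f, hfb, hfp⟩ := p.exists_dual_map_eq_bot_of_notMem hb inferInstance
  have hker : ∀ x ∈ p, f x = 0 := fun x hx => by
    have : f x ∈ p.map f := Submodule.mem_map_of_mem hx
    rwa [hfp, Submodule.mem_bot] at this
  have hinv : ∀ e : E, (∑ g : E ≃ₐ[k] E, g e • ρ g b) ∈
      {x : B | ∀ g : E ≃ₐ[k] E, ρ g x = x} := by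
    intro e h
    calc ρ h (∑ g : E ≃ₐ[k] E, g e • ρ g b)
        = ∑ g : E ≃ₐ[k] E, (h * g) e • ρ (h * g) b := by
          rw [map_sum]
          refine Finset.sum_congr rfl fun g _ => ?_
          rw [hsemi, map_mul]
          rfl
      _ = ∑ g : E ≃ₐ[k] E, g e • ρ g b :=
          Fintype.sum_equiv (Equiv.mulLeft h) _ _ (fun g => rfl)
  have hf0 : ∀ e : E, ∑ g : E ≃ₐ[k] E, g e * f (ρ g b) = 0 := by
    intro e
    have h1 : f (∑ g : E ≃ₐ[k] E, g e • ρ g b) = 0 :=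
      hker _ (Submodule.subset_span (hinv e))
    rw [map_sum] at h1
    simpa [smul_eq_mul] using h1
  have hinj : Function.Injective
      (fun g : E ≃ₐ[k] E => ((g : E →ₐ[k] E) : E →* E)) := by
    intro g1 g2 h
    exact AlgEquiv.ext fun x => DFunLike.congr_fun h x
  have hmli : LinearIndependent E
      (fun g : E ≃ₐ[k] E => (((g : E →ₐ[k] E) : E →* E) : E → E)) :=
    (linearIndependent_monoidHom E E).comp _ hinj
  have hsum0 : ∑ g ∈ Finset.univ, f (ρ g b) •
      (((g : E →ₐ[k] E) : E →* E) : E → E) = 0 := by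
    funext e
    simp only [Finset.sum_apply, Pi.smul_apply, smul_eq_mul, Pi.zero_apply]
    rw [← hf0 e]
    exact Finset.sum_congr rfl fun g _ => mul_comm _ _
  have := linearIndependent_iff'.mp hmli Finset.univ _ hsum0 1 (Finset.mem_univ 1)
  rw [map_one] at this
  simp only [AlgEquiv.one_apply] at this
  exact hfb this


/-- Let `E/k` be a finite Galois extension with Galois group `G`,
and let `B` be a finitely generated normal `E`-domain equipped with a semi-linear
`G`-action.  Then `R = B^G` is a finitely generated normal `k`-algebra and the
multiplication map `R ⊗_k E → B` is an isomorphism of `E`-algebras. -/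
theorem galois_descent_for_normal_affine_algebras
    (k E : Type*) [Field k] [Field E] [Algebra k E]
    [FiniteDimensional k E] [IsGalois k E]
    (B : Type*) [CommRing B] [IsDomain B]
    [Algebra E B] [Algebra k B] [IsScalarTower k E B]
    (hfg : Algebra.FiniteType E B)
    (hnormal : IsIntegrallyClosed B)
    -- a semi-linear action of `G = Gal(E/k)` on `B`
    (ρ : (E ≃ₐ[k] E) →* (B ≃ₐ[k] B))
    (hsemi : ∀ (g : E ≃ₐ[k] E) (lam : E) (b : B), ρ g (lam • b) = g lam • ρ g b)
    -- `R = B^G`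
    (R : Subalgebra k B)
    (hR : (R : Set B) = {b : B | ∀ g : E ≃ₐ[k] E, ρ g b = b}) :
    R.FG ∧ IsIntegrallyClosed R ∧
      Function.Bijective
        (Algebra.TensorProduct.productMap R.val (IsScalarTower.toAlgHom k E B)) := by
  classical
  have hmem : ∀ b : B, b ∈ R ↔ ∀ g : E ≃ₐ[k] E, ρ g b = b := fun b => by
    rw [← SetLike.mem_coe, hR]; exact Iff.rfl
  set φ := Algebra.TensorProduct.productMap R.val (IsScalarTower.toAlgHom k E B) with hφdef
  -- ### Injectivity
  let ζ : E ⊗[k] ↥R →ₗ[E] B := LinearMap.liftBaseChange E R.val.toLinearMap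
  let bR := Module.Basis.ofVectorSpace k ↥R
  have hcoeinj : Function.Injective (R.val.toLinearMap : ↥R →ₗ[k] B) :=
    fun x y h => Subtype.ext h
  have hliB : LinearIndependent E (fun i => ((bR i : ↥R) : B)) := by
    refine aux_li ρ hsemi _ (fun g i => (hmem _).mp (bR i).2 g) ?_
    exact bR.linearIndependent.map' R.val.toLinearMap (LinearMap.ker_eq_bot.mpr hcoeinj)
  let bT := Algebra.TensorProduct.basis E bR
  have hζbT : ∀ i, ζ (bT i) = ((bR i : ↥R) : B) := by
    intro i
    rw [Algebra.TensorProduct.basis_apply, LinearMap.liftBaseChange_tmul, one_smul]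
    rfl
  have hζ : Function.Injective ζ := by
    have hker : ∀ z : E ⊗[k] ↥R, ζ z = 0 → z = 0 := by
      intro z hz
      have h1 : ζ z = Finsupp.linearCombination E (fun i => ((bR i : ↥R) : B)) (bT.repr z) := by
        conv_lhs => rw [← bT.linearCombination_repr z]
        rw [Finsupp.apply_linearCombination]
        have hfun : (⇑ζ ∘ ⇑bT) = fun i => ((bR i : ↥R) : B) := funext hζbT
        rw [hfun]
      rw [hz] at h1
      have h2 : bT.repr z = 0 := linearIndependent_iff.mp hliB _ h1.symm
      have := congrArg bT.repr.symm h2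
      rwa [bT.repr.symm_apply_apply, map_zero] at this
    intro x y hxy
    have := hker (x - y) (by rw [map_sub, hxy, sub_self])
    exact sub_eq_zero.mp this
  have hφζ : ∀ z : E ⊗[k] ↥R, φ (Algebra.TensorProduct.comm k E ↥R z) = ζ z := by
    intro z
    induction z using TensorProduct.induction_on with
    | zero => simp
    | add x y hx hy => rw [map_add, map_add, map_add, hx, hy]
    | tmul e r =>
      rw [Algebra.TensorProduct.comm_tmul, LinearMap.liftBaseChange_tmul]
      simp only [hφdef, Algebra.TensorProduct.productMap_apply_tmul]
      rw [Algebra.smul_def, mul_comm]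
      rfl
  have hinjφ : Function.Injective φ := by
    intro x y h
    have h1 : ζ ((Algebra.TensorProduct.comm k E ↥R).symm x)
        = ζ ((Algebra.TensorProduct.comm k E ↥R).symm y) := by
      rw [← hφζ, ← hφζ, (Algebra.TensorProduct.comm k E ↥R).apply_symm_apply,
        (Algebra.TensorProduct.comm k E ↥R).apply_symm_apply, h]
    exact (Algebra.TensorProduct.comm k E ↥R).symm.injective (hζ h1)
  -- ### Surjectivity
  have hspan : ∀ b : B, b ∈ Submodule.span E (R : Set B) := by
    intro b; rw [hR]; exact aux_span ρ hsemi b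
  have hsurjφ : Function.Surjective φ := by
    intro b
    refine Submodule.span_induction (p := fun b _ => ∃ x, φ x = b) ?_ ?_ ?_ ?_ (hspan b)
    · intro r hr
      refine ⟨(⟨r, hr⟩ : ↥R) ⊗ₜ[k] (1 : E), ?_⟩
      simp [hφdef]
    · exact ⟨0, map_zero _⟩
    · rintro x y hx hy ⟨x', rfl⟩ ⟨y', rfl⟩
      exact ⟨x' + y', map_add _ _ _⟩
    · rintro e x hx ⟨x', rfl⟩
      refine ⟨((1 : ↥R) ⊗ₜ[k] e) * x', ?_⟩
      rw [map_mul]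
      simp only [hφdef, Algebra.TensorProduct.productMap_apply_tmul, map_one, one_mul]
      rw [Algebra.smul_def]
      rfl
  -- ### Module finiteness of B over R
  have hfin : Module.Finite ↥R B := by
    let bE := Module.finBasis k E
    refine ⟨⟨Finset.image (fun i => algebraMap E B (bE i)) Finset.univ, ?_⟩⟩
    rw [eq_top_iff]
    rintro b -
    obtain ⟨x, rfl⟩ := hsurjφ b
    induction x using TensorProduct.induction_on with
    | zero => rw [map_zero]; exact Submodule.zero_mem _
    | add x y hx hy => rw [map_add]; exact Submodule.add_mem _ hx hy
    | tmul r e =>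
      have he : algebraMap E B e = ∑ i, bE.repr e i • algebraMap E B (bE i) := by
        have h0 := congrArg (IsScalarTower.toAlgHom k E B).toLinearMap (bE.sum_repr e).symm
        conv_lhs => rw [← bE.sum_repr e]
        rw [map_sum]
        exact Finset.sum_congr rfl fun i _ => (IsScalarTower.toAlgHom k E B).map_smul_of_tower _ _
      have hterm : φ (r ⊗ₜ[k] e) = ∑ i, bE.repr e i • ((r : B) * algebraMap E B (bE i)) := by
        simp only [hφdef, Algebra.TensorProduct.productMap_apply_tmul]
        rw [show (IsScalarTower.toAlgHom k E B) e = algebraMap E B e from rfl, he,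
          Finset.mul_sum]
        exact Finset.sum_congr rfl fun i _ => mul_smul_comm _ _ _
      rw [hterm]
      refine Submodule.sum_mem _ fun i _ => ?_
      have h1 : (r : B) * algebraMap E B (bE i) = r • algebraMap E B (bE i) := rfl
      have h2 : bE.repr e i • ((r : B) * algebraMap E B (bE i))
          = ((bE.repr e i • r : ↥R)) • algebraMap E B (bE i) := by
        rw [h1, smul_assoc]
      rw [h2]
      exact Submodule.smul_mem _ _ (Submodule.subset_span
        (Finset.mem_image.mpr ⟨i, Finset.mem_univ i, rfl⟩))
  -- ### finite generation (Artin--Tate)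
  have hftB : Algebra.FiniteType k B := Algebra.FiniteType.trans inferInstance hfg
  have hfgR : R.FG := by
    have h1 : (⊤ : Subalgebra k ↥R).FG :=
      fg_of_fg_of_fg (A := k) (B := ↥R) (C := B) hftB.out hfin.fg_top (fun x y h => Subtype.ext h)
    exact (Subalgebra.fg_top R).mp h1
  -- ### integral closedness
  have hic : IsIntegrallyClosed ↥R := by
    haveI := hnormal
    rw [isIntegrallyClosed_iff (FractionRing ↥R)]
    intro x hx
    have hginj : Function.Injective
        ((algebraMap B (FractionRing B)).comp (algebraMap ↥R B)) :=
      (IsFractionRing.injective B (FractionRing B)).comp (fun x y h => Subtype.ext h)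
    set f : FractionRing ↥R →+* FractionRing B := IsFractionRing.lift hginj with hfdef
    have hfalg : ∀ r : ↥R, f (algebraMap ↥R (FractionRing ↥R) r)
        = algebraMap B (FractionRing B) (r : B) := fun r =>
      IsFractionRing.lift_algebraMap hginj r
    obtain ⟨q, qmonic, hq⟩ := hx
    have hintB : IsIntegral B (f x) := by
      refine ⟨q.map (algebraMap ↥R B), qmonic.map _, ?_⟩
      have h2 : (q.map (algebraMap ↥R B)).eval₂ (algebraMap B (FractionRing B)) (f x)
          = q.eval₂ ((algebraMap B (FractionRing B)).comp (algebraMap ↥R B)) (f x) :=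
        Polynomial.eval₂_map _ _ _
      have h3 : (algebraMap B (FractionRing B)).comp (algebraMap ↥R B)
          = f.comp (algebraMap ↥R (FractionRing ↥R)) :=
        RingHom.ext fun r => (hfalg r).symm
      rw [h2, h3, ← Polynomial.hom_eval₂, hq, map_zero]
    obtain ⟨b, hb⟩ := IsIntegrallyClosed.isIntegral_iff.mp hintB
    obtain ⟨⟨num, den⟩, hnd⟩ := IsLocalization.surj (nonZeroDivisors ↥R) x
    have hden0 : ((den : ↥R) : B) ≠ 0 := by
      intro h
      exact nonZeroDivisors.ne_zero den.2 (Subtype.ext h)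
    have hbden : b * ((den : ↥R) : B) = ((num : ↥R) : B) := by
      apply IsFractionRing.injective B (FractionRing B)
      have := congrArg f hnd
      rw [map_mul, hfalg, hfalg, ← hb] at this
      rw [map_mul]
      exact this
    have hbR : b ∈ R := by
      rw [hmem]
      intro g
      have hd : ρ g ((den : ↥R) : B) = ((den : ↥R) : B) := (hmem _).mp (den : ↥R).2 g
      have hn : ρ g ((num : ↥R) : B) = ((num : ↥R) : B) := (hmem _).mp num.2 g
      have h4 : ρ g b * ((den : ↥R) : B) = b * ((den : ↥R) : B) := by
        have := congrArg (ρ g) hbden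
        rw [map_mul, hd, hn] at this
        rw [this, hbden]
      exact mul_right_cancel₀ hden0 h4
    refine ⟨⟨b, hbR⟩, ?_⟩
    apply f.injective
    rw [hfalg]
    exact hb.trans rfl
  exact ⟨hfgR, hic, hinjφ, hsurjφ⟩
end
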